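/- arXiv:1212.0137 — 6 statements merged into one kernel-verified Lean document; each statement's English description precedes it below -/
import Mathlib

section
/- There exists a nonzero polynomial f ∈ ℂ[y] such that for every j ∈ {1,…,k}, the rational function of t = q^γ obtained by applying f(L^{δ_j}) to φ^{(j)}(λ_γ) is identically zero (equivalently, f(L_γ) annihilates each ψ^{(j)}_γ = φ^{(j)}(λ_γ)/ξ^{δ_j}_γ, so f(L_γ)W = {0} for the span W of ψ^{(1)},…,ψ^{(k)}). Moreover, for every integer N ≥ deg f there exists such a polynomial of degree exactly N; in particular the algebra 𝔄_z = {f ∈ ℂ[z+1/z] : f(L_γ)W ⊆ W} contains a polynomial of every sufficiently large degree. (Proposition 4.1.) -/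
open scoped BigOperators

namespace AW

noncomputable section

/-- q-shifted factorial `(u;q)_n`. -/
def qpoch (q u : ℂ) (n : ℕ) : ℂ := ∏ l ∈ Finset.range n, (1 - u * q ^ l)

/-- `(u;q)_∞`. -/
def qpochInf (q u : ℂ) : ℂ := ∏' l : ℕ, (1 - u * q ^ l)

/-- Askey–Wilson polynomial `p_n(x;a,b,c,d)` as a function of `z`, `x = (z+1/z)/2`. -/
def awP (q a b c d : ℂ) (n : ℕ) (z : ℂ) : ℂ :=
  qpoch q (a * b) n * qpoch q (a * c) n * qpoch q (a * d) n / a ^ n *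
    ∑ l ∈ Finset.range (n + 1),
      qpoch q (q ^ (-(n : ℤ))) l * qpoch q (a * b * c * d * q ^ ((n : ℤ) - 1)) l *
          qpoch q (a * z) l * qpoch q (a / z) l * q ^ l /
        (qpoch q (a * b) l * qpoch q (a * c) l * qpoch q (a * d) l * qpoch q q l)

/-- `λ_n = (q^{-n}-1)(1-abcd q^{n-1})`. -/
def lamn (q a b c d : ℂ) (n : ℤ) : ℂ := (q ^ (-n) - 1) * (1 - a * b * c * d * q ^ (n - 1))

/-- `λ_γ` as a rational function of `t = q^γ`. -/
def lamt (q a b c d t : ℂ) : ℂ := (1 / t - 1) * (1 - a * b * c * d * t / q)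

/-- `ξ^a_n`. -/
def xiA (q a b c d : ℂ) (n : ℕ) : ℂ :=
  q ^ n * qpoch q (a * b * c * d / q) n /
    (a ^ n * (qpoch q (b * c) n * qpoch q (b * d) n * qpoch q (c * d) n * qpoch q q n))

/-- `ξ^{δ}_n`, where `δ : Fin 4` encodes which of `a,b,c,d` is distinguished. -/
def xiD (q a b c d : ℂ) (δ : Fin 4) (n : ℕ) : ℂ :=
  match δ with
  | ⟨0, _⟩ => xiA q a b c d n
  | ⟨1, _⟩ => xiA q b c d a n
  | ⟨2, _⟩ => xiA q c d a b n
  | ⟨3, _⟩ => xiA q d a b c n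

/-- `ξ^a_m p_m(x)` with the convention that it vanishes for negative `m`. -/
def xiP (q a b c d : ℂ) (m : ℤ) (z : ℂ) : ℂ :=
  if 0 ≤ m then xiA q a b c d m.toNat * awP q a b c d m.toNat z else 0

/-- `A^a_γ` as a rational function of `t = q^γ`. -/
def Acoef (q a b c d t : ℂ) : ℂ :=
  a * (1 - b * c * t) * (1 - b * d * t) * (1 - c * d * t) * (1 - q * t) /
    (q * (1 - a * b * c * d * t ^ 2 / q) * (1 - a * b * c * d * t ^ 2))

/-- `C^a_γ` as a rational function of `t = q^γ`. -/
def Ccoef (q a b c d t : ℂ) : ℂ :=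
  q * (1 - a * b * c * d * t / q ^ 2) * (1 - a * b * t / q) * (1 - a * c * t / q) *
      (1 - a * d * t / q) /
    (a * (1 - a * b * c * d * t ^ 2 / q ^ 2) * (1 - a * b * c * d * t ^ 2 / q))

/-- `B^a_γ` as a rational function of `t = q^γ`. -/
def Bcoef (q a b c d t : ℂ) : ℂ := a / q + q / a - Acoef q a b c d t - Ccoef q a b c d t

/-- The operator `L^a` acting on functions of `t = q^γ`. -/
def Lop (q a b c d : ℂ) (r : ℂ → ℂ) : ℂ → ℂ := fun t =>
  Acoef q a b c d t * r (q * t) + Bcoef q a b c d t * r t + Ccoef q a b c d t * r (t / q)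

/-- `L^{δ}` for `δ ∈ {a,b,c,d}`. -/
def LopD (q a b c d : ℂ) (δ : Fin 4) : (ℂ → ℂ) → ℂ → ℂ :=
  match δ with
  | ⟨0, _⟩ => Lop q a b c d
  | ⟨1, _⟩ => Lop q b c d a
  | ⟨2, _⟩ => Lop q c d a b
  | ⟨3, _⟩ => Lop q d a b c

/-- `f(L)` applied to a function `r` of `t = q^γ`. -/
def polyLop (L : (ℂ → ℂ) → ℂ → ℂ) (f : Polynomial ℂ) (r : ℂ → ℂ) : ℂ → ℂ := fun t =>
  ∑ i ∈ Finset.range (f.natDegree + 1), f.coeff i * (L^[i] r) t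

/-- `κ^{b;i,j}_n` as a Laurent polynomial in `t = q^n` (paper indexing `1 ≤ i, j ≤ k`). -/
def kapB (q a b c d : ℂ) (k i j : ℕ) (t : ℂ) : ℂ :=
  t ^ (-((k : ℤ) - 1)) * (b / a) ^ ((j : ℤ) - (i : ℤ)) *
    (qpoch q (a * c * t * q ^ (1 - (k : ℤ))) (k - i) *
      qpoch q (a * d * t * q ^ (1 - (k : ℤ))) (k - i)) *
    (qpoch q (b * c * t * q ^ (1 - (i : ℤ))) (i - 1) *
      qpoch q (b * d * t * q ^ (1 - (i : ℤ))) (i - 1))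

/-- `κ^{δ_j;i,j}_n`; equal to `1` when `δ_j = a`. -/
def kapD (q a b c d : ℂ) (δ : Fin 4) (k i j : ℕ) (t : ℂ) : ℂ :=
  match δ with
  | ⟨0, _⟩ => 1
  | ⟨1, _⟩ => kapB q a b c d k i j t
  | ⟨2, _⟩ => kapB q a c b d k i j t
  | ⟨3, _⟩ => kapB q a d c b k i j t

/-- `τ_n` as a Laurent polynomial in `t = q^n`. -/
def tauF (q a b c d : ℂ) (k : ℕ) (φ : Fin k → Polynomial ℂ) (δ : Fin k → Fin 4) (t : ℂ) : ℂ :=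
  Matrix.det (Matrix.of fun i j : Fin k =>
    kapD q a b c d (δ j) k ((i : ℕ) + 1) ((j : ℕ) + 1) t *
      Polynomial.eval (lamt q a b c d (t * q ^ (-(i : ℤ)))) (φ j))

/-- `p̂_n` as a function of `z`, `x = (z+1/z)/2`. -/
def phat (q a b c d : ℂ) (k : ℕ) (φ : Fin k → Polynomial ℂ) (δ : Fin k → Fin 4)
    (n : ℕ) (z : ℂ) : ℂ :=
  Matrix.det (Matrix.of fun i j : Fin (k + 1) =>
    if hj : (j : ℕ) < k then
      kapD q a b c d (δ ⟨j, hj⟩) k ((i : ℕ) + 1) ((j : ℕ) + 1) (q ^ (n : ℕ)) *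
        Polynomial.eval (lamn q a b c d ((n : ℤ) - (i : ℕ))) (φ ⟨j, hj⟩)
    else xiP q a b c d ((n : ℤ) - (i : ℕ)) z)

/-- the functions `n ↦ ψ^{(j)}_n = φ^{(j)}(λ_n)/ξ^{δ_j}_n` on `ℕ`. -/
def psiF (q a b c d : ℂ) (k : ℕ) (φ : Fin k → Polynomial ℂ) (δ : Fin k → Fin 4)
    (j : Fin k) : ℕ → ℂ := fun n =>
  Polynomial.eval (lamn q a b c d n) (φ j) / xiD q a b c d (δ j) n

/-- a function `ℂ∖{0} → ℂ` given by a Laurent polynomial. -/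
def IsLaurentFun (f : ℂ → ℂ) : Prop :=
  ∃ (p : Polynomial ℂ) (m : ℕ), ∀ t : ℂ, t ≠ 0 → f t = Polynomial.eval t p / t ^ m

/-- half-integer `λ_{n-j/2}` as a Laurent polynomial in `t = q^n`, where `q2 = q^{1/2}`. -/
def lamHalf (abcd q2 : ℂ) (j : ℤ) (t : ℂ) : ℂ :=
  (q2 ^ j / t - 1) * (1 - abcd * q2 ^ (-j - 2) * t)

/-- `ε^{(r)}_n` as a Laurent polynomial in `t = q^n`. -/
def epsF (abcd q2 : ℂ) (r : ℕ) (t : ℂ) : ℂ :=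
  if r % 4 = 0 ∨ r % 4 = 1 then 1
  else lamHalf abcd q2 ((r : ℤ) - 2) t - lamHalf abcd q2 (r : ℤ) t

end

end AW

open AW

namespace AWX

open AW

noncomputable section

set_option maxHeartbeats 4000000

variable {q a b c d t : ℂ}


lemma lam_u (hq : q ≠ 0) (ht : t ≠ 0) :
    lamt q a b c d t = (1-t)*(q-a*b*c*d*t)/(q*t) := by
  unfold lamt
  rw [show (1:ℂ)/t - 1 = (1-t)/t by rw [div_sub_one ht],
    one_sub_div hq, div_mul_div_comm, mul_comm t q]

lemma lam_v (hq : q ≠ 0) (ht : t ≠ 0) :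
    lamt q a b c d (q*t) = (1-q*t)*(1-a*b*c*d*t)/(q*t) := by
  unfold lamt
  rw [show (1:ℂ)/(q*t) - 1 = (1-q*t)/(q*t) by rw [div_sub_one (mul_ne_zero hq ht)],
    one_sub_div hq, div_mul_div_comm]
  rw [div_eq_div_iff (by exact mul_ne_zero (mul_ne_zero hq ht) hq) (mul_ne_zero hq ht)]
  ring

lemma lam_w (hq : q ≠ 0) (ht : t ≠ 0) :
    lamt q a b c d (t/q) = (q-t)*(q^2-a*b*c*d*t)/(q^2*t) := by
  unfold lamt
  have hq2 : (q:ℂ)^2 ≠ 0 := pow_ne_zero 2 hq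
  rw [show (1:ℂ)/(t/q) - 1 = (q-t)/t by rw [one_div_div, div_sub_one ht],
    show a*b*c*d*(t/q)/q = a*b*c*d*t/q^2 by ring,
    one_sub_div hq2, div_mul_div_comm]
  rw [div_eq_div_iff (mul_ne_zero ht hq2) (mul_ne_zero hq2 ht)]
  ring

lemma Acoef_frac (hq : q ≠ 0) :
    Acoef q a b c d t =
      a * (1 - b*c*t) * (1 - b*d*t) * (1 - c*d*t) * (1 - q*t) /
        ((q - a*b*c*d*t^2) * (1 - a*b*c*d*t^2)) := by
  unfold Acoef
  rw [show q * (1 - a*b*c*d*t^2/q) = q - a*b*c*d*t^2 by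
    rw [mul_sub, mul_one, ← mul_div_assoc, mul_div_cancel_left₀ _ hq]]

lemma Ccoef_frac (hq : q ≠ 0) (ha : a ≠ 0)
    (hD1 : q - a*b*c*d*t^2 ≠ 0) (hD3 : q^2 - a*b*c*d*t^2 ≠ 0) :
    Ccoef q a b c d t =
      (q^2 - a*b*c*d*t) * (q - a*b*t) * (q - a*c*t) * (q - a*d*t) /
        (q * a * (q^2 - a*b*c*d*t^2) * (q - a*b*c*d*t^2)) := by
  unfold Ccoef
  have hq2 : (q:ℂ)^2 ≠ 0 := pow_ne_zero 2 hq
  have k1 : (q:ℂ)^2*(q*(q*q)) ≠ 0 := mul_ne_zero hq2 (mul_ne_zero hq (mul_ne_zero hq hq))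
  have k2 : a * ((q^2 - a*b*c*d*t^2) * (q - a*b*c*d*t^2)) ≠ 0 :=
    mul_ne_zero ha (mul_ne_zero hD3 hD1)
  have k3 : (q:ℂ)^2*q ≠ 0 := mul_ne_zero hq2 hq
  have k4 : q * a * (q^2 - a*b*c*d*t^2) * (q - a*b*c*d*t^2) ≠ 0 :=
    mul_ne_zero (mul_ne_zero (mul_ne_zero hq ha) hD3) hD1
  rw [one_sub_div hq2, one_sub_div hq, one_sub_div hq, one_sub_div hq,
    one_sub_div hq2, one_sub_div hq]
  rw [show q * ((q^2 - a*b*c*d*t)/q^2) * ((q - a*b*t)/q) * ((q - a*c*t)/q) * ((q - a*d*t)/q)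
        / (a * ((q^2 - a*b*c*d*t^2)/q^2) * ((q - a*b*c*d*t^2)/q))
      = (q * ((q^2 - a*b*c*d*t) * (q - a*b*t) * (q - a*c*t) * (q - a*d*t)) / (q^2*(q*(q*q))))
        / (a * ((q^2 - a*b*c*d*t^2) * (q - a*b*c*d*t^2)) / (q^2*q)) by ring]
  rw [div_div_eq_mul_div, div_mul_eq_mul_div, div_div]
  rw [div_eq_div_iff (mul_ne_zero k1 k2) k4]
  ring

lemma comb1 (q a t D1 D2 D3 NA NC Nu Nv Nw eN fN : ℂ)
    (hq : q ≠ 0) (ha : a ≠ 0) (ht : t ≠ 0)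
    (h1 : D1 ≠ 0) (h2 : D2 ≠ 0) (h3 : D3 ≠ 0)
    (H : NA*(Nv-Nu)*(q^2*a*D3) + NC*(Nw-q*Nu)*D2 = (eN*Nu + fN*t)*(D1*D2*D3)) :
    NA/(D1*D2) * (Nv/(q*t) - Nu/(q*t)) + NC/(q*a*D3*D1) * (Nw/(q^2*t) - Nu/(q*t))
      = eN/(q^2*a) * (Nu/(q*t)) + fN/(q^3*a) := by
  have hqt : q*t ≠ 0 := mul_ne_zero hq ht
  have h2t : q^2*t ≠ 0 := mul_ne_zero (pow_ne_zero 2 hq) ht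
  have k1 : (D1*D2)*(q*t) ≠ 0 := mul_ne_zero (mul_ne_zero h1 h2) hqt
  have k2 : q*a*D3*D1*(q^2*t*(q*t)) ≠ 0 :=
    mul_ne_zero (mul_ne_zero (mul_ne_zero (mul_ne_zero hq ha) h3) h1) (mul_ne_zero h2t hqt)
  have k3 : q^2*a*(q*t) ≠ 0 := mul_ne_zero (mul_ne_zero (pow_ne_zero 2 hq) ha) hqt
  have k4 : (q:ℂ)^3*a ≠ 0 := mul_ne_zero (pow_ne_zero 3 hq) ha
  rw [div_sub_div_same, div_sub_div Nw Nu h2t hqt,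
    div_mul_div_comm, div_mul_div_comm, div_mul_div_comm,
    div_add_div _ _ k1 k2, div_add_div _ _ k3 k4,
    div_eq_div_iff (mul_ne_zero k1 k2) (mul_ne_zero k3 k4)]
  linear_combination (q^8*a^2*t^3*D1) * H

lemma comb2 (q a t D1 D2 D3 NA NC Nu Nv Nw e2 e1 e0 : ℂ)
    (hq : q ≠ 0) (ha : a ≠ 0) (ht : t ≠ 0)
    (h1 : D1 ≠ 0) (h2 : D2 ≠ 0) (h3 : D3 ≠ 0)
    (H : NA*(Nv-Nu)*(q*Nu-Nw)*(q*a*D3) + NC*(Nw-q*Nu)*(Nu-Nv)*D2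
        = (e2*Nu^2 + e1*Nu*t + e0*t^2)*(D1*D2*D3)) :
    NA/(D1*D2) * (Nv/(q*t) - Nu/(q*t)) * (Nu/(q*t) - Nw/(q^2*t))
      + NC/(q*a*D3*D1) * (Nw/(q^2*t) - Nu/(q*t)) * (Nu/(q*t) - Nv/(q*t))
      = e2/(q^2*a) * (Nu/(q*t))^2 + e1/(q^3*a) * (Nu/(q*t)) + e0/(q^4*a) := by
  have hqt : q*t ≠ 0 := mul_ne_zero hq ht
  have h2t : q^2*t ≠ 0 := mul_ne_zero (pow_ne_zero 2 hq) ht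
  have k1 : (D1*D2)*(q*t)*(q*t*(q^2*t)) ≠ 0 :=
    mul_ne_zero (mul_ne_zero (mul_ne_zero h1 h2) hqt) (mul_ne_zero hqt h2t)
  have k2 : q*a*D3*D1*(q^2*t*(q*t))*(q*t) ≠ 0 :=
    mul_ne_zero (mul_ne_zero (mul_ne_zero (mul_ne_zero (mul_ne_zero hq ha) h3) h1)
      (mul_ne_zero h2t hqt)) hqt
  have k3 : q^2*a*(q*t)^2 ≠ 0 :=
    mul_ne_zero (mul_ne_zero (pow_ne_zero 2 hq) ha) (pow_ne_zero 2 hqt)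
  have k4 : (q:ℂ)^3*a*(q*t) ≠ 0 := mul_ne_zero (mul_ne_zero (pow_ne_zero 3 hq) ha) hqt
  have k5 : (q:ℂ)^4*a ≠ 0 := mul_ne_zero (pow_ne_zero 4 hq) ha
  rw [div_sub_div_same, div_sub_div Nu Nw hqt h2t, div_sub_div Nw Nu h2t hqt,
    div_sub_div_same,
    div_mul_div_comm, div_mul_div_comm, div_mul_div_comm, div_mul_div_comm,
    div_pow, div_mul_div_comm, div_mul_div_comm,
    div_add_div _ _ k1 k2, div_add_div _ _ k3 k4,
    div_add_div _ _ (mul_ne_zero k3 k4) k5,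
    div_eq_div_iff (mul_ne_zero k1 k2) (mul_ne_zero (mul_ne_zero k3 k4) k5)]
  linear_combination (q^17*a^3*t^7*D1) * H

def E0N (q a b c d : ℂ) : ℂ :=
  a^3*b*c*d + q*a^2 - q*a^2*c*d - q*a^2*b*d - q*a^2*b*c - q*a^3*b*c*d + q^2*a*b*c*d - 2*q^2*a^2 + q^2*a^2*c*d + q^2*a^2*b*d + q^2*a^2*b*c + q^3*a*d + q^3*a*c + q^3*a*b - 2*q^3*a*b*c*d + q^3*a^2 - q^4 - q^4*a*d - q^4*a*c - q^4*a*b + q^4*a*b*c*d + q^5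

def S1N (q a b c d : ℂ) : ℂ :=
  2*a^3*b*c*d - q*a*b*c*d + 2*q*a^2 - q*a^2*c*d - q*a^2*b*d - q*a^2*b*c - 4*q*a^3*b*c*d - q^2*a*d - q^2*a*c - q^2*a*b + 4*q^2*a*b*c*d - 5*q^2*a^2 + 2*q^2*a^2*c*d + 2*q^2*a^2*b*d + 2*q^2*a^2*b*c + 2*q^2*a^3*b*c*d + 2*q^3 + 2*q^3*a*d + 2*q^3*a*c + 2*q^3*a*b - 5*q^3*a*b*c*d + 4*q^3*a^2 - q^3*a^2*c*d - q^3*a^2*b*d - q^3*a^2*b*c - 4*q^4 - q^4*a*d - q^4*a*c - q^4*a*b + 2*q^4*a*b*c*d - q^4*a^2 + 2*q^5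

def S0N (q a b c d : ℂ) : ℂ :=
  -a^3*b*c*d + a^4*b^2*c^2*d^2 + q*a^2*b*c*d^2 + q*a^2*b*c^2*d + q*a^2*b^2*c*d - q*a^2*b^2*c^2*d^2 + 3*q*a^3*b*c*d - q*a^3*b*c^2*d^2 - q*a^3*b^2*c*d^2 - q*a^3*b^2*c^2*d - 2*q*a^4*b^2*c^2*d^2 - q^2*a*b*c*d + q^2*a^2 - 2*q^2*a^2*b*c*d^2 - 2*q^2*a^2*b*c^2*d - 2*q^2*a^2*b^2*c*d + 3*q^2*a^2*b^2*c^2*d^2 - 4*q^2*a^3*b*c*d + 2*q^2*a^3*b*c^2*d^2 + 2*q^2*a^3*b^2*c*d^2 + 2*q^2*a^3*b^2*c^2*d + q^2*a^4*b^2*c^2*d^2 - q^3*a*d - q^3*a*c - q^3*a*b + 3*q^3*a*b*c*d - 3*q^3*a^2 + q^3*a^2*c*d + q^3*a^2*b*d + q^3*a^2*b*c + q^3*a^2*b*c*d^2 + q^3*a^2*b*c^2*d + q^3*a^2*b^2*c*d - 3*q^3*a^2*b^2*c^2*d^2 + 3*q^3*a^3*b*c*d - q^3*a^3*b*c^2*d^2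 - q^3*a^3*b^2*c*d^2 - q^3*a^3*b^2*c^2*d + q^4 + 2*q^4*a*d + 2*q^4*a*c + 2*q^4*a*b - 4*q^4*a*b*c*d + 3*q^4*a^2 - 2*q^4*a^2*c*d - 2*q^4*a^2*b*d - 2*q^4*a^2*b*c + q^4*a^2*b^2*c^2*d^2 - q^4*a^3*b*c*d - 2*q^5 - q^5*a*d - q^5*a*c - q^5*a*b + 3*q^5*a*b*c*d - q^5*a^2 + q^5*a^2*c*d + q^5*a^2*b*d + q^5*a^2*b*c + q^6 - q^6*a*b*c*d

def e1c (q a : ℂ) : ℂ := (1-q)*(a^2-q^3)/(q^2*a)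
def e0c (q a b c d : ℂ) : ℂ := E0N q a b c d / (q^3*a)
def s2c (q a : ℂ) : ℂ := (a^2+q^2)*(q-1)^2/(q^2*a)
def s1c (q a b c d : ℂ) : ℂ := S1N q a b c d / (q^3*a)
def s0c (q a b c d : ℂ) : ℂ := S0N q a b c d / (q^4*a)
def cP (q a b c d : ℂ) : ℂ := (q + 1/q - 2)*(1 + a*b*c*d/q)
def c0P (q a b c d : ℂ) : ℂ :=
  (q - 1/q)^2*(a*b*c*d/q) - cP q a b c d * (1 + a*b*c*d/q)
def muc (q a : ℂ) : ℂ := a/q + q/a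

lemma idE1 (hq : q ≠ 0) (ha : a ≠ 0) (ht : t ≠ 0)
    (hD1 : q - a*b*c*d*t^2 ≠ 0) (hD2 : 1 - a*b*c*d*t^2 ≠ 0)
    (hD3 : q^2 - a*b*c*d*t^2 ≠ 0) :
    Acoef q a b c d t * (lamt q a b c d (q*t) - lamt q a b c d t)
      + Ccoef q a b c d t * (lamt q a b c d (t/q) - lamt q a b c d t)
      = e1c q a * lamt q a b c d t + e0c q a b c d := by
  rw [Acoef_frac hq, Ccoef_frac hq ha hD1 hD3, lam_u hq ht, lam_v hq ht, lam_w hq ht]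
  rw [show e1c q a = ((1-q)*(a^2-q^3))/(q^2*a) from by rw [e1c, mul_div_assoc]]
  rw [e0c]
  refine comb1 q a t _ _ _ _ _ _ _ _ _ _ hq ha ht hD1 hD2 hD3 ?_
  unfold E0N; ring

lemma idE2 (hq : q ≠ 0) (ha : a ≠ 0) (ht : t ≠ 0)
    (hD1 : q - a*b*c*d*t^2 ≠ 0) (hD2 : 1 - a*b*c*d*t^2 ≠ 0)
    (hD3 : q^2 - a*b*c*d*t^2 ≠ 0) :
    Acoef q a b c d t * (lamt q a b c d (q*t) - lamt q a b c d t)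
        * (lamt q a b c d t - lamt q a b c d (t/q))
      + Ccoef q a b c d t * (lamt q a b c d (t/q) - lamt q a b c d t)
        * (lamt q a b c d t - lamt q a b c d (q*t))
      = s2c q a * (lamt q a b c d t)^2 + s1c q a b c d * lamt q a b c d t
        + s0c q a b c d := by
  rw [Acoef_frac hq, Ccoef_frac hq ha hD1 hD3, lam_u hq ht, lam_v hq ht, lam_w hq ht]
  rw [show s2c q a = ((a^2+q^2)*(q-1)^2)/(q^2*a) from by rw [s2c, mul_div_assoc]]
  rw [s1c, s0c]
  refine comb2 q a t _ _ _ _ _ _ _ _ _ _ _ hq ha ht hD1 hD2 hD3 ?_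
  unfold S1N S0N; ring

lemma idE3 (hq : q ≠ 0) (ht : t ≠ 0) :
    lamt q a b c d (q*t) + lamt q a b c d (t/q)
      = (q + 1/q) * lamt q a b c d t + cP q a b c d := by
  unfold lamt cP; field_simp; ring

lemma idE4 (hq : q ≠ 0) (ht : t ≠ 0) :
    lamt q a b c d (q*t) * lamt q a b c d (t/q)
      = (lamt q a b c d t)^2 - cP q a b c d * lamt q a b c d t + c0P q a b c d := by
  have hq2 : (q:ℂ)^2 ≠ 0 := pow_ne_zero 2 hq
  have hq3 : (q:ℂ)^3 ≠ 0 := pow_ne_zero 3 hq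
  have hqt : q*t ≠ 0 := mul_ne_zero hq ht
  have h2t : q^2*t ≠ 0 := mul_ne_zero hq2 ht
  rw [lam_u hq ht, lam_v hq ht, lam_w hq ht,
    show cP q a b c d = (q^2 + 1 - 2*q)*(q + a*b*c*d)/q^2 from by
      rw [cP]
      rw [show q + 1/q - 2 = (q^2 + 1 - 2*q)/q from by
        rw [eq_div_iff hq]; rw [sub_mul, add_mul, one_div, inv_mul_cancel₀ hq]; ring,
        show (1:ℂ) + a*b*c*d/q = (q + a*b*c*d)/q from by
        rw [eq_div_iff hq]; rw [add_mul, one_mul, div_mul_cancel₀ _ hq],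
        div_mul_div_comm, ← pow_two],
    show c0P q a b c d
        = ((q^2-1)^2*(a*b*c*d) - (q^2 + 1 - 2*q)*(q + a*b*c*d)^2)/q^3 from by
      have k1 : (q:ℂ)^2*q ≠ 0 := mul_ne_zero hq2 hq
      have k2 : q*q*q ≠ 0 := mul_ne_zero (mul_ne_zero hq hq) hq
      rw [c0P, cP]
      rw [show q - 1/q = (q^2 - 1)/q from by
        rw [eq_div_iff hq]; rw [sub_mul, one_div, inv_mul_cancel₀ hq]; ring,
        show q + 1/q - 2 = (q^2 + 1 - 2*q)/q from by
        rw [eq_div_iff hq]; rw [sub_mul, add_mul, one_div, inv_mul_cancel₀ hq]; ring,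
        show (1:ℂ) + a*b*c*d/q = (q + a*b*c*d)/q from by
        rw [eq_div_iff hq]; rw [add_mul, one_mul, div_mul_cancel₀ _ hq],
        div_pow, div_mul_div_comm, div_mul_div_comm, div_mul_div_comm,
        div_sub_div _ _ k1 k2, div_eq_div_iff (mul_ne_zero k1 k2) hq3]
      ring]
  have k3 : (q*t)^2 ≠ 0 := pow_ne_zero 2 hqt
  have k4 : q^2*(q*t) ≠ 0 := mul_ne_zero hq2 hqt
  have k5 : (q*t)^2*(q^2*(q*t)) ≠ 0 := mul_ne_zero k3 k4
  rw [div_mul_div_comm, div_pow, div_mul_div_comm,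
    div_sub_div _ _ k3 k4, div_add_div _ _ k5 hq3,
    div_eq_div_iff (by exact mul_ne_zero hqt h2t) (mul_ne_zero k5 hq3)]
  ring

def p1P (q a b c d : ℂ) : Polynomial ℂ :=
  Polynomial.C (q + 1/q) * Polynomial.X + Polynomial.C (cP q a b c d)
def p2P (q a b c d : ℂ) : Polynomial ℂ :=
  Polynomial.X^2 - Polynomial.C (cP q a b c d) * Polynomial.X + Polynomial.C (c0P q a b c d)
def sPol (q a b c d : ℂ) : Polynomial ℂ :=
  Polynomial.C (s2c q a) * Polynomial.X^2 + Polynomial.C (s1c q a b c d) * Polynomial.X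
    + Polynomial.C (s0c q a b c d)

def psiP (q a b c d : ℂ) : ℕ → Polynomial ℂ
  | 0 => 0
  | 1 => Polynomial.C (e1c q a) * Polynomial.X + Polynomial.C (e0c q a b c d)
  | (n+2) => p1P q a b c d * psiP q a b c d (n+1) - p2P q a b c d * psiP q a b c d n
      + Polynomial.X^n * sPol q a b c d

def Valid (q P t : ℂ) : Prop := t ≠ 0 ∧ ∀ i : ℤ, 1 - P * t^2 * q^i ≠ 0

lemma valid_D2 {P : ℂ} (hv : Valid q P t) : 1 - P*t^2 ≠ 0 := by
  have := hv.2 0; simpa using this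

lemma valid_D1 {P : ℂ} (hq : q ≠ 0) (hv : Valid q P t) : q - P*t^2 ≠ 0 := by
  intro e
  apply hv.2 (-1)
  rw [← sub_eq_zero.mp e, zpow_neg_one, mul_inv_cancel₀ hq, sub_self]

lemma valid_D3 {P : ℂ} (hq : q ≠ 0) (hv : Valid q P t) : q^2 - P*t^2 ≠ 0 := by
  intro e
  apply hv.2 (-2)
  have h2 : (q:ℂ)^2 * q^(-2:ℤ) = 1 := by
    rw [← zpow_natCast q 2, ← zpow_add₀ hq]; norm_num
  rw [← sub_eq_zero.mp e, h2, sub_self]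

lemma valid_mul {P : ℂ} (hq : q ≠ 0) (hv : Valid q P t) : Valid q P (q*t) := by
  refine ⟨mul_ne_zero hq hv.1, fun i => ?_⟩
  have h := hv.2 (i+2)
  have e : P*(q*t)^2*q^i = P*t^2*q^(i+2) := by
    rw [zpow_add₀ hq, mul_pow, show (q:ℂ)^(2:ℤ) = q^2 by rw [zpow_two, pow_two]]
    ring
  rw [e]; exact h

lemma valid_div {P : ℂ} (hq : q ≠ 0) (hv : Valid q P t) : Valid q P (t/q) := by
  refine ⟨div_ne_zero hv.1 hq, fun i => ?_⟩
  have h := hv.2 (i-2)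
  have e : P*(t/q)^2*q^i = P*t^2*q^(i-2) := by
    rw [zpow_sub₀ hq, div_pow, show (q:ℂ)^(2:ℤ) = q^2 by rw [zpow_two, pow_two]]
    ring
  rw [e]; exact h

lemma GKey (hq : q ≠ 0) (ha : a ≠ 0) :
    ∀ (m : ℕ) (t : ℂ), Valid q (a*b*c*d) t →
    Acoef q a b c d t * (lamt q a b c d (q*t))^m
      + Ccoef q a b c d t * (lamt q a b c d (t/q))^m
      - (Acoef q a b c d t + Ccoef q a b c d t) * (lamt q a b c d t)^m
      = Polynomial.eval (lamt q a b c d t) (psiP q a b c d m) := by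
  intro m
  induction m using Nat.strong_induction_on with
  | _ m ih =>
    match m with
    | 0 => intro t hv; simp [psiP]
    | 1 =>
      intro t hv
      have h := idE1 hq ha hv.1 (valid_D1 hq hv) (valid_D2 hv) (valid_D3 hq hv)
      simp only [psiP, Polynomial.eval_add, Polynomial.eval_mul, Polynomial.eval_C,
        Polynomial.eval_X, pow_one]
      linear_combination h
    | (m+2) =>
      intro t hv
      have h0 := ih m (by omega) t hv
      have h1 := ih (m+1) (by omega) t hv
      have h2 := idE2 hq ha hv.1 (valid_D1 hq hv) (valid_D2 hv) (valid_D3 hq hv)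
      have h3 := idE3 (a := a) (b := b) (c := c) (d := d) hq hv.1
      have h4 := idE4 (a := a) (b := b) (c := c) (d := d) hq hv.1
      rw [show psiP q a b c d (m+2)
          = p1P q a b c d * psiP q a b c d (m+1) - p2P q a b c d * psiP q a b c d m
            + Polynomial.X^m * sPol q a b c d from rfl]
      simp only [p1P, p2P, sPol, Polynomial.eval_add, Polynomial.eval_sub,
        Polynomial.eval_mul, Polynomial.eval_pow, Polynomial.eval_X, Polynomial.eval_C]
      linear_combination
        ((q+1/q)*lamt q a b c d t + cP q a b c d)*h1
        - ((lamt q a b c d t)^2 - cP q a b c d*lamt q a b c d t + c0P q a b c d)*h0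
        + (lamt q a b c d t)^m*h2
        + (Acoef q a b c d t*(lamt q a b c d (q*t))^(m+1)
            + Ccoef q a b c d t*(lamt q a b c d (t/q))^(m+1)
            - (Acoef q a b c d t + Ccoef q a b c d t)*(lamt q a b c d t)^(m+1))*h3
        - (Acoef q a b c d t*(lamt q a b c d (q*t))^m
            + Ccoef q a b c d t*(lamt q a b c d (t/q))^m
            - (Acoef q a b c d t + Ccoef q a b c d t)*(lamt q a b c d t)^m)*h4

open Polynomial in
def PhiP (q a b c d : ℂ) (m : ℕ) : Polynomial ℂ :=
  Polynomial.C (muc q a) * Polynomial.X^m + psiP q a b c d m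

def epsq (q a b c d : ℂ) (m : ℕ) : ℂ := muc q a + (psiP q a b c d m).coeff m

def Mq (q a b c d : ℂ) (φ : Polynomial ℂ) : Polynomial ℂ :=
  ∑ m ∈ Finset.range (φ.natDegree + 1), Polynomial.C (φ.coeff m) * PhiP q a b c d m

def FF (q a b c d : ℂ) (n : ℕ) : Polynomial ℂ :=
  ∏ i ∈ Finset.range (n + 1), (Polynomial.X - Polynomial.C (epsq q a b c d i))

lemma p1P_deg : (p1P q a b c d).natDegree ≤ 1 := by
  refine le_trans (Polynomial.natDegree_add_le _ _)
    (max_le ?_ (le_trans (le_of_eq (Polynomial.natDegree_C _)) (by norm_num)))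
  exact le_trans (Polynomial.natDegree_C_mul_le _ _) Polynomial.natDegree_X_le

lemma p2P_deg : (p2P q a b c d).natDegree ≤ 2 := by
  refine le_trans (Polynomial.natDegree_add_le _ _)
    (max_le ?_ (le_trans (le_of_eq (Polynomial.natDegree_C _)) (by norm_num)))
  refine le_trans (Polynomial.natDegree_sub_le _ _) (max_le (by simp) ?_)
  refine le_trans (Polynomial.natDegree_C_mul_le _ _)
    (le_trans Polynomial.natDegree_X_le (by norm_num))

lemma sPol_deg : (sPol q a b c d).natDegree ≤ 2 := by
  refine le_trans (Polynomial.natDegree_add_le _ _) (max_le ?_ (by simp))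
  refine le_trans (Polynomial.natDegree_add_le _ _) (max_le ?_ ?_)
  · exact le_trans (Polynomial.natDegree_C_mul_le _ _) (by simp)
  · refine le_trans (Polynomial.natDegree_C_mul_le _ _)
      (le_trans Polynomial.natDegree_X_le (by norm_num))

lemma psiP_deg : ∀ m, (psiP q a b c d m).natDegree ≤ m := by
  intro m
  induction m using Nat.strong_induction_on with
  | _ m ih =>
    match m with
    | 0 => simp [psiP]
    | 1 =>
      refine le_trans (Polynomial.natDegree_add_le _ _) (max_le ?_ (by simp))
      exact le_trans (Polynomial.natDegree_C_mul_le _ _) Polynomial.natDegree_X_le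
    | (m+2) =>
      refine le_trans (Polynomial.natDegree_add_le _ _) (max_le (le_trans (Polynomial.natDegree_sub_le _ _) (max_le ?_ ?_)) ?_)
      · exact le_trans (Polynomial.natDegree_mul_le)
          (by have := ih (m+1) (by omega); have := p1P_deg (q := q) (a := a) (b := b) (c := c) (d := d); omega)
      · exact le_trans (Polynomial.natDegree_mul_le)
          (by have := ih m (by omega); have := p2P_deg (q := q) (a := a) (b := b) (c := c) (d := d); omega)
      · exact le_trans (Polynomial.natDegree_mul_le)
          (by have := sPol_deg (q := q) (a := a) (b := b) (c := c) (d := d);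
              have := Polynomial.natDegree_X_pow (R := ℂ) m; omega)

lemma PhiP_deg (m : ℕ) : (PhiP q a b c d m).natDegree ≤ m := by
  refine le_trans (Polynomial.natDegree_add_le _ _) (max_le ?_ (psiP_deg m))
  exact le_trans (Polynomial.natDegree_C_mul_le _ _) (by simp)

lemma PhiP_coeff_self (m : ℕ) : (PhiP q a b c d m).coeff m = epsq q a b c d m := by
  unfold PhiP epsq
  rw [Polynomial.coeff_add, Polynomial.coeff_C_mul, Polynomial.coeff_X_pow]
  simp

lemma Mq_sub_coeff (n : ℕ) (φ : Polynomial ℂ) (hφ : φ.natDegree ≤ n) :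
    ∀ N, n ≤ N →
      (Mq q a b c d φ - Polynomial.C (epsq q a b c d n) * φ).coeff N = 0 := by
  intro N hN
  rw [Polynomial.coeff_sub, Polynomial.coeff_C_mul]
  unfold Mq
  rw [Polynomial.finset_sum_coeff]
  simp only [Polynomial.coeff_C_mul]
  rcases lt_or_ge φ.natDegree N with hlt | hge
  · rw [Polynomial.coeff_eq_zero_of_natDegree_lt hlt, mul_zero, sub_zero]
    apply Finset.sum_eq_zero
    intro m hm
    have hm' : m ≤ φ.natDegree := Nat.lt_succ_iff.mp (Finset.mem_range.mp hm)
    rw [Polynomial.coeff_eq_zero_of_natDegree_lt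
      (lt_of_le_of_lt (PhiP_deg m) (lt_of_le_of_lt hm' hlt)), mul_zero]
  · have h1 : φ.natDegree = N := le_antisymm (le_trans hφ hN) hge
    have h2 : n = N := le_antisymm hN (le_trans hge hφ)
    rw [h1, Finset.sum_range_succ, Finset.sum_eq_zero, zero_add, PhiP_coeff_self, h2]
    · ring
    · intro m hm
      rw [Polynomial.coeff_eq_zero_of_natDegree_lt
        (lt_of_le_of_lt (PhiP_deg m) (Finset.mem_range.mp hm)), mul_zero]

lemma Mq_sub_zero (φ : Polynomial ℂ) (hφ : φ.natDegree ≤ 0) :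
    Mq q a b c d φ = Polynomial.C (epsq q a b c d 0) * φ := by
  have hc : φ = Polynomial.C (φ.coeff 0) := Polynomial.eq_C_of_natDegree_le_zero hφ
  rw [hc]
  simp [Mq, PhiP, psiP, epsq, Polynomial.natDegree_C]
  ring

/-! ### operator layer -/

def LopE (q a b c d : ℂ) : (ℂ → ℂ) →ₗ[ℂ] (ℂ → ℂ) where
  toFun := Lop q a b c d
  map_add' r s := by
    funext t; simp only [Lop, Pi.add_apply]; ring
  map_smul' m r := by
    funext t; simp only [Lop, Pi.smul_apply, smul_eq_mul, RingHom.id_apply]; ring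

lemma polyLop_eq (f : Polynomial ℂ) (r : ℂ → ℂ) :
    polyLop (Lop q a b c d) f r = Polynomial.aeval (LopE q a b c d) f r := by
  rw [Polynomial.aeval_eq_sum_range]
  funext t
  simp only [polyLop, LinearMap.sum_apply, LinearMap.smul_apply, Module.End.pow_apply,
    Finset.sum_apply, Pi.smul_apply, smul_eq_mul]
  rfl

lemma polyLop_mul (f g : Polynomial ℂ) (r : ℂ → ℂ) (t : ℂ) :
    polyLop (Lop q a b c d) (f*g) r t
      = polyLop (Lop q a b c d) f (polyLop (Lop q a b c d) g r) t := by
  simp only [polyLop_eq, map_mul]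
  rfl

lemma Lop_congr {P : ℂ} (hq : q ≠ 0) (r₁ r₂ : ℂ → ℂ)
    (h : ∀ s, Valid q P s → r₁ s = r₂ s) :
    ∀ t, Valid q P t → Lop q a b c d r₁ t = Lop q a b c d r₂ t := by
  intro t hv
  unfold Lop
  rw [h _ (valid_mul hq hv), h _ hv, h _ (valid_div hq hv)]

lemma iter_congr {P : ℂ} (hq : q ≠ 0) :
    ∀ (i : ℕ) (r₁ r₂ : ℂ → ℂ), (∀ s, Valid q P s → r₁ s = r₂ s) →
    ∀ t, Valid q P t → (Lop q a b c d)^[i] r₁ t = (Lop q a b c d)^[i] r₂ t := by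
  intro i
  induction i with
  | zero => intro r₁ r₂ h t hv; simpa using h t hv
  | succ n ihn =>
    intro r₁ r₂ h t hv
    rw [Function.iterate_succ_apply, Function.iterate_succ_apply]
    exact ihn _ _ (fun s hs => Lop_congr hq r₁ r₂ h s hs) t hv

lemma polyLop_congr {P : ℂ} (hq : q ≠ 0) (f : Polynomial ℂ) (r₁ r₂ : ℂ → ℂ)
    (h : ∀ s, Valid q P s → r₁ s = r₂ s) (t : ℂ) (hv : Valid q P t) :
    polyLop (Lop q a b c d) f r₁ t = polyLop (Lop q a b c d) f r₂ t := by
  unfold polyLop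
  exact Finset.sum_congr rfl fun i _ => by rw [iter_congr hq i r₁ r₂ h t hv]

lemma Lop_zero : Lop q a b c d (fun _ => 0) = fun _ => 0 := by
  funext t; simp [Lop]

lemma iter_zero (i : ℕ) : (Lop q a b c d)^[i] (fun _ => (0:ℂ)) = fun _ => 0 := by
  induction i with
  | zero => rfl
  | succ n ihn => rw [Function.iterate_succ_apply, Lop_zero, ihn]

lemma polyLop_zero (f : Polynomial ℂ) (t : ℂ) :
    polyLop (Lop q a b c d) f (fun _ => 0) t = 0 := by
  unfold polyLop
  simp [iter_zero]

lemma polyLop_linear (e : ℂ) (r : ℂ → ℂ) (t : ℂ) :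
    polyLop (Lop q a b c d) (Polynomial.X - Polynomial.C e) r t
      = Lop q a b c d r t - e * r t := by
  unfold polyLop
  rw [Polynomial.natDegree_X_sub_C]
  rw [Finset.sum_range_succ, Finset.sum_range_one]
  simp only [Polynomial.coeff_sub, Polynomial.coeff_X_zero, Polynomial.coeff_X_one,
    Polynomial.coeff_C, Function.iterate_one, Function.iterate_zero, id_eq]
  norm_num
  ring

lemma Lop_eval (hq : q ≠ 0) (ha : a ≠ 0) (φ : Polynomial ℂ) (t : ℂ)
    (hv : Valid q (a*b*c*d) t) :
    Lop q a b c d (fun s => Polynomial.eval (lamt q a b c d s) φ) t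
      = Polynomial.eval (lamt q a b c d t) (Mq q a b c d φ) := by
  have hR : Polynomial.eval (lamt q a b c d t) (Mq q a b c d φ)
      = ∑ i ∈ Finset.range (φ.natDegree+1), φ.coeff i *
          Polynomial.eval (lamt q a b c d t) (PhiP q a b c d i) := by
    unfold Mq
    rw [Polynomial.eval_finset_sum]
    exact Finset.sum_congr rfl fun i _ => by
      rw [Polynomial.eval_mul, Polynomial.eval_C]
  rw [hR]
  show Acoef q a b c d t * Polynomial.eval (lamt q a b c d (q*t)) φ
      + Bcoef q a b c d t * Polynomial.eval (lamt q a b c d t) φ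
      + Ccoef q a b c d t * Polynomial.eval (lamt q a b c d (t/q)) φ = _
  unfold Bcoef
  conv_lhs => rw [Polynomial.eval_eq_sum_range, Polynomial.eval_eq_sum_range,
    Polynomial.eval_eq_sum_range]
  rw [Finset.mul_sum, Finset.mul_sum, Finset.mul_sum, ← Finset.sum_add_distrib,
    ← Finset.sum_add_distrib]
  refine Finset.sum_congr rfl fun i _ => ?_
  have hg := GKey hq ha i t hv
  simp only [PhiP, Polynomial.eval_add, Polynomial.eval_mul, Polynomial.eval_C,
    Polynomial.eval_pow, Polynomial.eval_X, muc]
  linear_combination (φ.coeff i) * hg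

/-! ### annihilation -/

lemma Ann (hq : q ≠ 0) (ha : a ≠ 0) :
    ∀ (n : ℕ) (φ : Polynomial ℂ), φ.natDegree ≤ n → ∀ t, Valid q (a*b*c*d) t →
    polyLop (Lop q a b c d) (FF q a b c d n)
      (fun s => Polynomial.eval (lamt q a b c d s) φ) t = 0 := by
  intro n
  induction n with
  | zero =>
    intro φ hφ t hv
    rw [show FF q a b c d 0 = Polynomial.X - Polynomial.C (epsq q a b c d 0) from by
      unfold FF; rw [Finset.prod_range_one]]
    rw [polyLop_linear, Lop_eval hq ha φ t hv, Mq_sub_zero φ hφ,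
      Polynomial.eval_mul, Polynomial.eval_C]
    ring
  | succ n ihn =>
    intro φ hφ t hv
    rw [show FF q a b c d (n+1)
        = FF q a b c d n * (Polynomial.X - Polynomial.C (epsq q a b c d (n+1))) from by
      unfold FF; rw [Finset.prod_range_succ]]
    rw [polyLop_mul]
    have hcong : ∀ s, Valid q (a*b*c*d) s →
        polyLop (Lop q a b c d) (Polynomial.X - Polynomial.C (epsq q a b c d (n+1)))
          (fun s' => Polynomial.eval (lamt q a b c d s') φ) s
        = (fun s' => Polynomial.eval (lamt q a b c d s')
            (Mq q a b c d φ - Polynomial.C (epsq q a b c d (n+1)) * φ)) s := by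
      intro s hs
      rw [polyLop_linear, Lop_eval hq ha φ s hs]
      simp only [Polynomial.eval_sub, Polynomial.eval_mul, Polynomial.eval_C]
    rw [polyLop_congr hq _ _ _ hcong t hv]
    refine ihn _ ?_ t hv
    exact Polynomial.natDegree_le_iff_coeff_eq_zero.mpr
      (fun N hN => Mq_sub_coeff (n+1) φ hφ N (by omega))

lemma FF_monic (n : ℕ) : (FF q a b c d n).Monic :=
  Polynomial.monic_prod_of_monic _ _ fun i _ => Polynomial.monic_X_sub_C _

lemma FF_natDegree (n : ℕ) : (FF q a b c d n).natDegree = n + 1 := by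
  unfold FF
  rw [Polynomial.natDegree_prod _ _ (fun i _ => Polynomial.X_sub_C_ne_zero _)]
  simp [Polynomial.natDegree_X_sub_C]

lemma annFactor (hq : q ≠ 0) (ha : a ≠ 0) (n : ℕ) (g h : Polynomial ℂ)
    (hfac : g = h * FF q a b c d n) (φ : Polynomial ℂ) (hφd : φ.natDegree ≤ n)
    (t : ℂ) (hv : Valid q (a*b*c*d) t) :
    polyLop (Lop q a b c d) g (fun s => Polynomial.eval (lamt q a b c d s) φ) t = 0 := by
  rw [hfac, polyLop_mul]
  have hcong : ∀ s, Valid q (a*b*c*d) s →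
      polyLop (Lop q a b c d) (FF q a b c d n)
        (fun s' => Polynomial.eval (lamt q a b c d s') φ) s = (fun _ => (0:ℂ)) s :=
    fun s hs => Ann hq ha n φ hφd s hs
  rw [polyLop_congr hq _ _ _ hcong t hv, polyLop_zero]

end

end AWX

set_option maxHeartbeats 1000000 in
theorem annihilating_polynomial_exists
    (q : ℝ) (hq0 : 0 < q) (hq1 : q < 1)
    (a b c d : ℂ) (ha : a ≠ 0) (hb : b ≠ 0) (hc : c ≠ 0) (hd : d ≠ 0)
    (k : ℕ) (hk : 1 ≤ k)
    (φ : Fin k → Polynomial ℂ) (hφ : ∀ j, φ j ≠ 0)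
    (δ : Fin k → Fin 4) :
    ∃ f : Polynomial ℂ, f ≠ 0 ∧
      (∀ j : Fin k, ∀ t : ℂ, t ≠ 0 →
        (∀ i : ℤ, 1 - a * b * c * d * t ^ 2 * (q : ℂ) ^ i ≠ 0) →
        polyLop (LopD (q : ℂ) a b c d (δ j)) f
          (fun s => Polynomial.eval (lamt (q : ℂ) a b c d s) (φ j)) t = 0) ∧
      ∀ N : ℕ, f.natDegree ≤ N → ∃ g : Polynomial ℂ, g ≠ 0 ∧ g.natDegree = N ∧
        ∀ j : Fin k, ∀ t : ℂ, t ≠ 0 →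
          (∀ i : ℤ, 1 - a * b * c * d * t ^ 2 * (q : ℂ) ^ i ≠ 0) →
          polyLop (LopD (q : ℂ) a b c d (δ j)) g
            (fun s => Polynomial.eval (lamt (q : ℂ) a b c d s) (φ j)) t = 0 := by
  have hqc : (q:ℂ) ≠ 0 := Complex.ofReal_ne_zero.mpr (ne_of_gt hq0)
  set Q : ℂ := (q:ℂ) with hQ
  set D : ℕ := Finset.univ.sup (fun j : Fin k => (φ j).natDegree) with hD
  set F0 : Polynomial ℂ := AWX.FF Q a b c d D with hF0
  set F1 : Polynomial ℂ := AWX.FF Q b c d a D with hF1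
  set F2 : Polynomial ℂ := AWX.FF Q c d a b D with hF2
  set F3 : Polynomial ℂ := AWX.FF Q d a b c D with hF3
  have hmf : (F0*F1*F2*F3).Monic :=
    (((AWX.FF_monic D).mul (AWX.FF_monic D)).mul (AWX.FF_monic D)).mul (AWX.FF_monic D)
  have hfin : ∀ v : Fin 4, v = 0 ∨ v = 1 ∨ v = 2 ∨ v = 3 := by decide
  have main : ∀ g : Polynomial ℂ,
      (∃ h, g = h * F0) → (∃ h, g = h * F1) → (∃ h, g = h * F2) → (∃ h, g = h * F3) →
      ∀ j : Fin k, ∀ t : ℂ, t ≠ 0 →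
      (∀ i : ℤ, 1 - a * b * c * d * t ^ 2 * Q ^ i ≠ 0) →
      polyLop (LopD Q a b c d (δ j)) g
        (fun s => Polynomial.eval (lamt Q a b c d s) (φ j)) t = 0 := by
    intro g hg0 hg1 hg2 hg3 j t ht hti
    have hdeg : (φ j).natDegree ≤ D := by
      rw [hD]; exact Finset.le_sup (f := fun j => (φ j).natDegree) (Finset.mem_univ j)
    rcases hfin (δ j) with h|h|h|h <;> rw [h]
    · obtain ⟨h0, hfac⟩ := hg0
      have hv : AWX.Valid Q (a*b*c*d) t := ⟨ht, hti⟩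
      exact AWX.annFactor hqc ha D g h0 hfac (φ j) hdeg t hv
    · obtain ⟨h1', hfac⟩ := hg1
      have hv : AWX.Valid Q (b*c*d*a) t := ⟨ht, fun i => by
        rw [show b*c*d*a = a*b*c*d by ring]; exact hti i⟩
      have hlam : (fun s => Polynomial.eval (lamt Q a b c d s) (φ j))
          = (fun s => Polynomial.eval (lamt Q b c d a s) (φ j)) := by
        funext s
        rw [show lamt Q a b c d s = lamt Q b c d a s by unfold AW.lamt; ring]
      rw [hlam]
      exact AWX.annFactor hqc hb D g h1' hfac (φ j) hdeg t hv
    · obtain ⟨h2', hfac⟩ := hg2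
      have hv : AWX.Valid Q (c*d*a*b) t := ⟨ht, fun i => by
        rw [show c*d*a*b = a*b*c*d by ring]; exact hti i⟩
      have hlam : (fun s => Polynomial.eval (lamt Q a b c d s) (φ j))
          = (fun s => Polynomial.eval (lamt Q c d a b s) (φ j)) := by
        funext s
        rw [show lamt Q a b c d s = lamt Q c d a b s by unfold AW.lamt; ring]
      rw [hlam]
      exact AWX.annFactor hqc hc D g h2' hfac (φ j) hdeg t hv
    · obtain ⟨h3', hfac⟩ := hg3
      have hv : AWX.Valid Q (d*a*b*c) t := ⟨ht, fun i => by
        rw [show d*a*b*c = a*b*c*d by ring]; exact hti i⟩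
      have hlam : (fun s => Polynomial.eval (lamt Q a b c d s) (φ j))
          = (fun s => Polynomial.eval (lamt Q d a b c s) (φ j)) := by
        funext s
        rw [show lamt Q a b c d s = lamt Q d a b c s by unfold AW.lamt; ring]
      rw [hlam]
      exact AWX.annFactor hqc hd D g h3' hfac (φ j) hdeg t hv
  refine ⟨F0*F1*F2*F3, hmf.ne_zero, ?_, ?_⟩
  · intro j t ht hti
    exact main _ ⟨F1*F2*F3, by ring⟩ ⟨F0*F2*F3, by ring⟩ ⟨F0*F1*F3, by ring⟩
      ⟨F0*F1*F2, by ring⟩ j t ht hti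
  · intro N hN
    refine ⟨Polynomial.X^(N - (F0*F1*F2*F3).natDegree) * (F0*F1*F2*F3), ?_, ?_, ?_⟩
    · exact ((Polynomial.monic_X_pow _).mul hmf).ne_zero
    · rw [(Polynomial.monic_X_pow _).natDegree_mul hmf, Polynomial.natDegree_X_pow]
      omega
    · intro j t ht hti
      refine main _
        ⟨Polynomial.X^(N - (F0*F1*F2*F3).natDegree)*(F1*F2*F3), by ring⟩
        ⟨Polynomial.X^(N - (F0*F1*F2*F3).natDegree)*(F0*F2*F3), by ring⟩
        ⟨Polynomial.X^(N - (F0*F1*F2*F3).natDegree)*(F0*F1*F3), by ring⟩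
        ⟨Polynomial.X^(N - (F0*F1*F2*F3).natDegree)*(F0*F1*F2), by ring⟩ j t ht hti
end

section
/- For every j ∈ ℕ₀ there exists a polynomial P ∈ ℂ[y] with deg P ≤ j − 1 (P = 0 when j = 0) such that A^a(t)·λ_γ(qt)^j + B^a(t)·λ_γ(t)^j + C^a(t)·λ_γ(t/q)^j = (a·q^{−j−1} + q^{j+1}·a^{−1})·λ_γ(t)^j + P(λ_γ(t)) as an identity of rational functions of t. In particular the operator L^a maps the polynomial algebra ℂ[λ_γ] into itself and, in the basis of powers of λ_γ, acts triangularly with diagonal entries a/q^{j+1} + q^{j+1}/a. -/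
open scoped BigOperators

open AW


lemma AWdrec (q a s : ℂ) (hq : q ≠ 0) (ha : a ≠ 0) (hs : s ≠ 0) :
    (q^2+1)/q * (a/(s*q*q) + s*q*q/a) - (a/(s*q) + s*q/a)
      = a/(s*q*q*q) + s*q*q*q/a := by
  have f1 : (q^2+1)/q*q = q^2+1 := div_mul_cancel₀ _ hq
  have f2 : a/(s*q*q)*(s*q*q) = a :=
    div_mul_cancel₀ _ (mul_ne_zero (mul_ne_zero hs hq) hq)
  have f3 : s*q*q/a*a = s*q*q := div_mul_cancel₀ _ ha
  have f4 : a/(s*q)*(s*q) = a := div_mul_cancel₀ _ (mul_ne_zero hs hq)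
  have f5 : s*q/a*a = s*q := div_mul_cancel₀ _ ha
  have f6 : a/(s*q*q*q)*(s*q*q*q) = a :=
    div_mul_cancel₀ _ (mul_ne_zero (mul_ne_zero (mul_ne_zero hs hq) hq) hq)
  have f7 : s*q*q*q/a*a = s*q*q*q := div_mul_cancel₀ _ ha
  apply mul_right_cancel₀ (b := a*(s*q*q*q))
    (mul_ne_zero ha (mul_ne_zero (mul_ne_zero (mul_ne_zero hs hq) hq) hq))
  linear_combination ((a/(s*q*q))*(s*q*q)*a + (s*q*q/a)*a*(s*q*q)) * f1
    + ((q^2+1)*a) * f2 + ((q^2+1)*(s*q*q)) * f3 - (q*q*a) * f4 - (s*q*q*q) * f5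
    - a * f6 - (s*q*q*q) * f7

lemma AWdnat (q a : ℂ) (n : ℕ) :
    a * q ^ (-(n : ℤ) - 1) + q ^ ((n : ℤ) + 1) / a = a / q ^ (n+1) + q ^ (n+1) / a := by
  have h1 : (-(n:ℤ)-1) = -((n+1:ℕ):ℤ) := by push_cast; ring
  have h2 : ((n:ℤ)+1) = ((n+1:ℕ):ℤ) := by push_cast; ring
  rw [h1, h2, zpow_neg, zpow_natCast, ← div_eq_mul_inv]

lemma AWdegMulLt (r p : Polynomial ℂ) (k n : ℕ) (hr : r.degree ≤ (k : WithBot ℕ))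
    (hp : p.degree < (n : WithBot ℕ)) : (r * p).degree < ((k + n : ℕ) : WithBot ℕ) := by
  rcases eq_or_ne p 0 with h | h
  · simp [h]
  rcases eq_or_ne r 0 with h0 | h0
  · simp [h0]
  rw [Polynomial.degree_mul]
  have h1 : r.degree + p.degree < (k : WithBot ℕ) + (n : WithBot ℕ) :=
    WithBot.add_lt_add_of_le_of_lt (Polynomial.degree_ne_bot.mpr h0) hr hp
  calc r.degree + p.degree < (k : WithBot ℕ) + (n : WithBot ℕ) := h1
    _ = ((k + n : ℕ) : WithBot ℕ) := by push_cast; ring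

section Frak
variable (q a b c d t : ℂ)

lemma AWu (hq : q ≠ 0) (ht : t ≠ 0) :
    lamt q a b c d t = (1 - t) * (q - a*b*c*d*t) / (t*q) := by
  unfold lamt
  rw [show (1:ℂ)/t - 1 = (1-t)/t from by rw [div_sub_one ht],
    show 1 - a*b*c*d*t/q = (q - a*b*c*d*t)/q from by
      rw [eq_div_iff hq, sub_mul, one_mul, div_mul_cancel₀ _ hq],
    div_mul_div_comm]

lemma AWv (hq : q ≠ 0) (ht : t ≠ 0) :
    lamt q a b c d (q*t) = (1 - q*t) * (1 - a*b*c*d*t) / (q*t) := by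
  unfold lamt
  rw [show (1:ℂ)/(q*t) - 1 = (1-q*t)/(q*t) from by rw [div_sub_one (mul_ne_zero hq ht)],
    show 1 - a*b*c*d*(q*t)/q = 1 - a*b*c*d*t from by congr 1; rw [div_eq_iff hq]; ring,
    div_mul_eq_mul_div]

lemma AWw (hq : q ≠ 0) (ht : t ≠ 0) :
    lamt q a b c d (t/q) = (q - t) * (q*q - a*b*c*d*t) / (t*(q*q)) := by
  unfold lamt
  rw [one_div_div,
    show q/t - 1 = (q-t)/t from by rw [div_sub_one ht],
    show 1 - a*b*c*d*(t/q)/q = (q*q - a*b*c*d*t)/(q*q) from by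
      rw [← mul_div_assoc, div_div, eq_div_iff (mul_ne_zero hq hq), sub_mul, one_mul,
        div_mul_cancel₀ _ (mul_ne_zero hq hq)],
    div_mul_div_comm]

lemma AWLu (hq : q ≠ 0) (ht : t ≠ 0) :
    lamt q a b c d t * (t*q) = (1 - t) * (q - a*b*c*d*t) := by
  rw [AWu q a b c d t hq ht, div_mul_cancel₀ _ (mul_ne_zero ht hq)]

lemma AWLv (hq : q ≠ 0) (ht : t ≠ 0) :
    lamt q a b c d (q*t) * (q*t) = (1 - q*t) * (1 - a*b*c*d*t) := by
  rw [AWv q a b c d t hq ht, div_mul_cancel₀ _ (mul_ne_zero hq ht)]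

lemma AWLw (hq : q ≠ 0) (ht : t ≠ 0) :
    lamt q a b c d (t/q) * (t*(q*q)) = (q - t) * (q*q - a*b*c*d*t) := by
  rw [AWw q a b c d t hq ht, div_mul_cancel₀ _ (mul_ne_zero ht (mul_ne_zero hq hq))]

lemma AWLA (hq : q ≠ 0) (h1 : 1 - a * b * c * d * t ^ 2 ≠ 0)
    (h2 : 1 - a * b * c * d * t ^ 2 / q ≠ 0) :
    Acoef q a b c d t * ((q - a*b*c*d*t^2) * (1 - a*b*c*d*t^2)) =
      a * (1 - b*c*t) * (1 - b*d*t) * (1 - c*d*t) * (1 - q*t) := by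
  have h2' : q - a*b*c*d*t^2 ≠ 0 := by
    have e : q - a*b*c*d*t^2 = q*(1 - a*b*c*d*t^2/q) := by
      rw [mul_sub, mul_one, mul_div_cancel₀ _ hq]
    rw [e]; exact mul_ne_zero hq h2
  unfold Acoef
  rw [show 1 - a*b*c*d*t^2/q = (q - a*b*c*d*t^2)/q from by
      rw [eq_div_iff hq, sub_mul, one_mul, div_mul_cancel₀ _ hq],
    ← mul_div_assoc, mul_div_cancel_left₀ _ hq]
  rw [div_mul_cancel₀ _ (mul_ne_zero h2' h1)]

lemma AWLC (hq : q ≠ 0) (ha : a ≠ 0)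
    (h2 : 1 - a * b * c * d * t ^ 2 / q ≠ 0)
    (h3 : 1 - a * b * c * d * t ^ 2 / q ^ 2 ≠ 0) :
    Ccoef q a b c d t * (a * q * ((q^2 - a*b*c*d*t^2) * (q - a*b*c*d*t^2))) =
      (q^2 - a*b*c*d*t) * (q - a*b*t) * (q - a*c*t) * (q - a*d*t) := by
  have h2' : q - a*b*c*d*t^2 ≠ 0 := by
    have e : q - a*b*c*d*t^2 = q*(1 - a*b*c*d*t^2/q) := by
      rw [mul_sub, mul_one, mul_div_cancel₀ _ hq]
    rw [e]; exact mul_ne_zero hq h2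
  have h3' : q^2 - a*b*c*d*t^2 ≠ 0 := by
    have e : q^2 - a*b*c*d*t^2 = q^2*(1 - a*b*c*d*t^2/q^2) := by
      rw [mul_sub, mul_one, mul_div_cancel₀ _ (pow_ne_zero 2 hq)]
    rw [e]; exact mul_ne_zero (pow_ne_zero 2 hq) h3
  unfold Ccoef
  rw [show 1 - a*b*c*d*t/q^2 = (q^2 - a*b*c*d*t)/q^2 from by
      rw [eq_div_iff (pow_ne_zero 2 hq), sub_mul, one_mul, div_mul_cancel₀ _ (pow_ne_zero 2 hq)],
    show 1 - a*b*t/q = (q - a*b*t)/q from by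
      rw [eq_div_iff hq, sub_mul, one_mul, div_mul_cancel₀ _ hq],
    show 1 - a*c*t/q = (q - a*c*t)/q from by
      rw [eq_div_iff hq, sub_mul, one_mul, div_mul_cancel₀ _ hq],
    show 1 - a*d*t/q = (q - a*d*t)/q from by
      rw [eq_div_iff hq, sub_mul, one_mul, div_mul_cancel₀ _ hq],
    show 1 - a*b*c*d*t^2/q^2 = (q^2 - a*b*c*d*t^2)/q^2 from by
      rw [eq_div_iff (pow_ne_zero 2 hq), sub_mul, one_mul, div_mul_cancel₀ _ (pow_ne_zero 2 hq)],
    show 1 - a*b*c*d*t^2/q = (q - a*b*c*d*t^2)/q from by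
      rw [eq_div_iff hq, sub_mul, one_mul, div_mul_cancel₀ _ hq]]
  simp only [mul_div_assoc', div_mul_eq_mul_div, div_div, div_div_eq_mul_div, div_mul_div_comm]
  rw [div_eq_iff (by
    apply_rules [mul_ne_zero] <;> first | exact pow_ne_zero _ hq | assumption)]
  ring

lemma lemI1 (hq : q ≠ 0) (ht : t ≠ 0) :
    lamt q a b c d (q*t) + lamt q a b c d (t/q) = (q^2+1)/q * (lamt q a b c d t) + ((1 - q)*(1 - a*b*c*d)*q + (q - 1)*(q^2 - a*b*c*d))/q^2 := by
  have Lu := AWLu q a b c d t hq ht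
  have Lv := AWLv q a b c d t hq ht
  have Lw := AWLw q a b c d t hq ht
  have hk1 : (q^2+1)/q*q = q^2+1 := div_mul_cancel₀ _ hq
  have he0 : ((1 - q)*(1 - a*b*c*d)*q + (q - 1)*(q^2 - a*b*c*d))/q^2*q^2 = ((1 - q)*(1 - a*b*c*d)*q + (q - 1)*(q^2 - a*b*c*d)) := div_mul_cancel₀ _ (pow_ne_zero 2 hq)
  apply mul_right_cancel₀ (b := t*q^2) (mul_ne_zero ht (pow_ne_zero 2 hq))
  linear_combination q*Lv + Lw - ((lamt q a b c d t)*(t*q))*hk1 - (q^2+1)*Lu - t*he0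

lemma lemI2 (hq : q ≠ 0) (ht : t ≠ 0) :
    (lamt q a b c d (q*t)) * (lamt q a b c d (t/q)) = (lamt q a b c d t)^2 + ((q + a*b*c*d)*(2*q - q*q - 1))/q^2 * (lamt q a b c d t) + ((1 - q)*(q - 1)*(1 - a*b*c*d)*(q^2 - a*b*c*d))/q^3 := by
  have Lu := AWLu q a b c d t hq ht
  have Lv := AWLv q a b c d t hq ht
  have Lw := AWLw q a b c d t hq ht
  have hf1 : ((q + a*b*c*d)*(2*q - q*q - 1))/q^2*q^2 = ((q + a*b*c*d)*(2*q - q*q - 1)) := div_mul_cancel₀ _ (pow_ne_zero 2 hq)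
  have hf0 : ((1 - q)*(q - 1)*(1 - a*b*c*d)*(q^2 - a*b*c*d))/q^3*q^3 = ((1 - q)*(q - 1)*(1 - a*b*c*d)*(q^2 - a*b*c*d)) := div_mul_cancel₀ _ (pow_ne_zero 3 hq)
  apply mul_right_cancel₀ (b := t^2*q^3) (mul_ne_zero (pow_ne_zero 2 ht) (pow_ne_zero 3 hq))
  linear_combination ((lamt q a b c d (t/q))*(t*(q*q)))*Lv + ((1 - q*t)*(1 - a*b*c*d*t))*Lw
    - (q*((lamt q a b c d t)*(t*q) + ((1 - t)*(q - a*b*c*d*t))) + ((q + a*b*c*d)*(2*q - q*q - 1))*t)*Lu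
    - ((lamt q a b c d t)*(t*q)*t)*hf1 - t^2*hf0

lemma AWLB (hq : q ≠ 0) (ha : a ≠ 0) (h1 : 1 - a * b * c * d * t ^ 2 ≠ 0)
    (h2 : 1 - a * b * c * d * t ^ 2 / q ≠ 0)
    (h3 : 1 - a * b * c * d * t ^ 2 / q ^ 2 ≠ 0) :
    Bcoef q a b c d t * (a*q*((q - a*b*c*d*t^2)*((q^2 - a*b*c*d*t^2)*(1 - a*b*c*d*t^2)))) = ((a*a + q*q)*((q - a*b*c*d*t^2)*((q^2 - a*b*c*d*t^2)*(1 - a*b*c*d*t^2))) - (a*(1 - b*c*t)*(1 - b*d*t)*(1 - c*d*t)*(1 - q*t))*(a*q*(q^2 - a*b*c*d*t^2)) - ((q^2 - a*b*c*d*t)*(q - a*b*t)*(q - a*c*t)*(q - a*d*t))*(1 - a*b*c*d*t^2)) := by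
  have haq : a/q*q = a := div_mul_cancel₀ _ hq
  have hqa : q/a*a = q := div_mul_cancel₀ _ ha
  have LA := AWLA q a b c d t hq h1 h2
  have LC := AWLC q a b c d t hq ha h2 h3
  unfold Bcoef
  linear_combination (a*((q - a*b*c*d*t^2)*((q^2 - a*b*c*d*t^2)*(1 - a*b*c*d*t^2))))*haq + (q*((q - a*b*c*d*t^2)*((q^2 - a*b*c*d*t^2)*(1 - a*b*c*d*t^2))))*hqa - (a*q*(q^2 - a*b*c*d*t^2))*LA - (1 - a*b*c*d*t^2)*LC

lemma lemI3 (hq : q ≠ 0) (ha : a ≠ 0) (ht : t ≠ 0)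
    (h1 : 1 - a * b * c * d * t ^ 2 ≠ 0)
    (h2 : 1 - a * b * c * d * t ^ 2 / q ≠ 0)
    (h3 : 1 - a * b * c * d * t ^ 2 / q ^ 2 ≠ 0) :
    Acoef q a b c d t * (lamt q a b c d (q*t)) + Bcoef q a b c d t * (lamt q a b c d t) + Ccoef q a b c d t * (lamt q a b c d (t/q)) =
      (a*a + q^2*q^2)/(q^2*a) * (lamt q a b c d t) + ((1 - q)*(-q^4 + (b+c+d)*a*q^3 + b*c*d*(1 - q)*a*q^2 + a^2*(1 - q)*q - a^2*(b*c+b*d+c*d)*q + a^3*b*c*d))/(a*q^3) := by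
  have h2' : q - a*b*c*d*t^2 ≠ 0 := by
    have e : q - a*b*c*d*t^2 = q*(1 - a*b*c*d*t^2/q) := by
      rw [mul_sub, mul_one, mul_div_cancel₀ _ hq]
    rw [e]; exact mul_ne_zero hq h2
  have h3' : q^2 - a*b*c*d*t^2 ≠ 0 := by
    have e : q^2 - a*b*c*d*t^2 = q^2*(1 - a*b*c*d*t^2/q^2) := by
      rw [mul_sub, mul_one, mul_div_cancel₀ _ (pow_ne_zero 2 hq)]
    rw [e]; exact mul_ne_zero (pow_ne_zero 2 hq) h3
  have Lu := AWLu q a b c d t hq ht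
  have Lv := AWLv q a b c d t hq ht
  have Lw := AWLw q a b c d t hq ht
  have LA := AWLA q a b c d t hq h1 h2
  have LB := AWLB q a b c d t hq ha h1 h2 h3
  have LC := AWLC q a b c d t hq ha h2 h3
  have hd1 : (a*a + q^2*q^2)/(q^2*a)*(q^2*a) = a*a + q^2*q^2 :=
    div_mul_cancel₀ _ (mul_ne_zero (pow_ne_zero 2 hq) ha)
  have hc0 : ((1 - q)*(-q^4 + (b+c+d)*a*q^3 + b*c*d*(1 - q)*a*q^2 + a^2*(1 - q)*q - a^2*(b*c+b*d+c*d)*q + a^3*b*c*d))/(a*q^3)*(a*q^3) = ((1 - q)*(-q^4 + (b+c+d)*a*q^3 + b*c*d*(1 - q)*a*q^2 + a^2*(1 - q)*q - a^2*(b*c+b*d+c*d)*q + a^3*b*c*d)) :=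
    div_mul_cancel₀ _ (mul_ne_zero ha (pow_ne_zero 3 hq))
  apply mul_right_cancel₀ (b := a*q^3*t*((q - a*b*c*d*t^2)*((q^2 - a*b*c*d*t^2)*(1 - a*b*c*d*t^2))))
    (mul_ne_zero (mul_ne_zero (mul_ne_zero ha (pow_ne_zero 3 hq)) ht)
      (mul_ne_zero h2' (mul_ne_zero h3' h1)))
  linear_combination ((lamt q a b c d (q*t))*(t*q)*(a*q^2*(q^2 - a*b*c*d*t^2)))*LA + ((a*(1 - b*c*t)*(1 - b*d*t)*(1 - c*d*t)*(1 - q*t))*(a*q^2*(q^2 - a*b*c*d*t^2)))*Lv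
    + ((lamt q a b c d t)*(t*q)*q)*LB + (((a*a + q*q)*((q - a*b*c*d*t^2)*((q^2 - a*b*c*d*t^2)*(1 - a*b*c*d*t^2))) - (a*(1 - b*c*t)*(1 - b*d*t)*(1 - c*d*t)*(1 - q*t))*(a*q*(q^2 - a*b*c*d*t^2)) - ((q^2 - a*b*c*d*t)*(q - a*b*t)*(q - a*c*t)*(q - a*d*t))*(1 - a*b*c*d*t^2))*q - (a*a + q^2*q^2)*((q - a*b*c*d*t^2)*((q^2 - a*b*c*d*t^2)*(1 - a*b*c*d*t^2))))*Lu
    + ((lamt q a b c d (t/q))*(t*(q*q))*(1 - a*b*c*d*t^2))*LC + (((q^2 - a*b*c*d*t)*(q - a*b*t)*(q - a*c*t)*(q - a*d*t))*(1 - a*b*c*d*t^2))*Lw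
    - ((lamt q a b c d t)*(t*q)*((q - a*b*c*d*t^2)*((q^2 - a*b*c*d*t^2)*(1 - a*b*c*d*t^2))))*hd1 - (t*((q - a*b*c*d*t^2)*((q^2 - a*b*c*d*t^2)*(1 - a*b*c*d*t^2))))*hc0

lemma lemI4 (hq : q ≠ 0) (ha : a ≠ 0) (ht : t ≠ 0)
    (h1 : 1 - a * b * c * d * t ^ 2 ≠ 0)
    (h2 : 1 - a * b * c * d * t ^ 2 / q ≠ 0)
    (h3 : 1 - a * b * c * d * t ^ 2 / q ^ 2 ≠ 0) :
    Bcoef q a b c d t * ((2 - (q^2+1)/q) * (lamt q a b c d t)^2 + (((q + a*b*c*d)*(2*q - q*q - 1))/q^2 - ((1 - q)*(1 - a*b*c*d)*q + (q - 1)*(q^2 - a*b*c*d))/q^2) * (lamt q a b c d t) + ((1 - q)*(q - 1)*(1 - a*b*c*d)*(q^2 - a*b*c*d))/q^3) =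
      ((2*q - q*q - 1)*((a+b+c+d)*q + (a*b*c+a*b*d+a*c*d+b*c*d)))/q^2 * (lamt q a b c d t) + ((1 - q)^2*((a*b*c+a*b*d+a*c*d+b*c*d) - (a+b+c+d))*(q^2 - a*b*c*d))/q^3 := by
  have h2' : q - a*b*c*d*t^2 ≠ 0 := by
    have e : q - a*b*c*d*t^2 = q*(1 - a*b*c*d*t^2/q) := by
      rw [mul_sub, mul_one, mul_div_cancel₀ _ hq]
    rw [e]; exact mul_ne_zero hq h2
  have h3' : q^2 - a*b*c*d*t^2 ≠ 0 := by
    have e : q^2 - a*b*c*d*t^2 = q^2*(1 - a*b*c*d*t^2/q^2) := by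
      rw [mul_sub, mul_one, mul_div_cancel₀ _ (pow_ne_zero 2 hq)]
    rw [e]; exact mul_ne_zero (pow_ne_zero 2 hq) h3
  have Lu := AWLu q a b c d t hq ht
  have LB := AWLB q a b c d t hq ha h1 h2 h3
  have hk1 : (q^2+1)/q*q = q^2+1 := div_mul_cancel₀ _ hq
  have he0 : ((1 - q)*(1 - a*b*c*d)*q + (q - 1)*(q^2 - a*b*c*d))/q^2*q^2 = ((1 - q)*(1 - a*b*c*d)*q + (q - 1)*(q^2 - a*b*c*d)) := div_mul_cancel₀ _ (pow_ne_zero 2 hq)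
  have hf1 : ((q + a*b*c*d)*(2*q - q*q - 1))/q^2*q^2 = ((q + a*b*c*d)*(2*q - q*q - 1)) := div_mul_cancel₀ _ (pow_ne_zero 2 hq)
  have hf0 : ((1 - q)*(q - 1)*(1 - a*b*c*d)*(q^2 - a*b*c*d))/q^3*q^3 = ((1 - q)*(q - 1)*(1 - a*b*c*d)*(q^2 - a*b*c*d)) := div_mul_cancel₀ _ (pow_ne_zero 3 hq)
  have hb1 : ((2*q - q*q - 1)*((a+b+c+d)*q + (a*b*c+a*b*d+a*c*d+b*c*d)))/q^2*q^2 = ((2*q - q*q - 1)*((a+b+c+d)*q + (a*b*c+a*b*d+a*c*d+b*c*d))) := div_mul_cancel₀ _ (pow_ne_zero 2 hq)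
  have hb0 : ((1 - q)^2*((a*b*c+a*b*d+a*c*d+b*c*d) - (a+b+c+d))*(q^2 - a*b*c*d))/q^3*q^3 = ((1 - q)^2*((a*b*c+a*b*d+a*c*d+b*c*d) - (a+b+c+d))*(q^2 - a*b*c*d)) := div_mul_cancel₀ _ (pow_ne_zero 3 hq)
  apply mul_right_cancel₀ (b := a*q^4*t^2*((q - a*b*c*d*t^2)*((q^2 - a*b*c*d*t^2)*(1 - a*b*c*d*t^2))))
    (mul_ne_zero (mul_ne_zero (mul_ne_zero ha (pow_ne_zero 4 hq)) (pow_ne_zero 2 ht))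
      (mul_ne_zero h2' (mul_ne_zero h3' h1)))
  linear_combination ((2 - (q^2+1)/q)*(lamt q a b c d t)^2*t^2*q^3 + (((q + a*b*c*d)*(2*q - q*q - 1))/q^2 - ((1 - q)*(1 - a*b*c*d)*q + (q - 1)*(q^2 - a*b*c*d))/q^2)*(lamt q a b c d t)*t^2*q^3
      + ((1 - q)*(q - 1)*(1 - a*b*c*d)*(q^2 - a*b*c*d))/q^3*t^2*q^3)*LB
    - (((a*a + q*q)*((q - a*b*c*d*t^2)*((q^2 - a*b*c*d*t^2)*(1 - a*b*c*d*t^2))) - (a*(1 - b*c*t)*(1 - b*d*t)*(1 - c*d*t)*(1 - q*t))*(a*q*(q^2 - a*b*c*d*t^2)) - ((q^2 - a*b*c*d*t)*(q - a*b*t)*(q - a*c*t)*(q - a*d*t))*(1 - a*b*c*d*t^2))*(lamt q a b c d t)^2*t^2*q^2)*hk1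
    + (((a*a + q*q)*((q - a*b*c*d*t^2)*((q^2 - a*b*c*d*t^2)*(1 - a*b*c*d*t^2))) - (a*(1 - b*c*t)*(1 - b*d*t)*(1 - c*d*t)*(1 - q*t))*(a*q*(q^2 - a*b*c*d*t^2)) - ((q^2 - a*b*c*d*t)*(q - a*b*t)*(q - a*c*t)*(q - a*d*t))*(1 - a*b*c*d*t^2))*(lamt q a b c d t)*t^2*q)*hf1 - (((a*a + q*q)*((q - a*b*c*d*t^2)*((q^2 - a*b*c*d*t^2)*(1 - a*b*c*d*t^2))) - (a*(1 - b*c*t)*(1 - b*d*t)*(1 - c*d*t)*(1 - q*t))*(a*q*(q^2 - a*b*c*d*t^2)) - ((q^2 - a*b*c*d*t)*(q - a*b*t)*(q - a*c*t)*(q - a*d*t))*(1 - a*b*c*d*t^2))*(lamt q a b c d t)*t^2*q)*he0 + (((a*a + q*q)*((q - a*b*c*d*t^2)*((q^2 - a*b*c*d*t^2)*(1 - a*b*c*d*t^2))) - (a*(1 - b*c*t)*(1 - b*d*t)*(1 - c*d*t)*(1 - q*t))*(a*q*(q^2 - a*b*c*d*t^2)) - ((q^2 - a*b*c*d*t)*(q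 - a*b*t)*(q - a*c*t)*(q - a*d*t))*(1 - a*b*c*d*t^2))*t^2)*hf0
    + (((a*a + q*q)*((q - a*b*c*d*t^2)*((q^2 - a*b*c*d*t^2)*(1 - a*b*c*d*t^2))) - (a*(1 - b*c*t)*(1 - b*d*t)*(1 - c*d*t)*(1 - q*t))*(a*q*(q^2 - a*b*c*d*t^2)) - ((q^2 - a*b*c*d*t)*(q - a*b*t)*(q - a*c*t)*(q - a*d*t))*(1 - a*b*c*d*t^2))*(2*q - q^2 - 1)*((lamt q a b c d t)*t*q + ((1 - t)*(q - a*b*c*d*t))) + ((a*a + q*q)*((q - a*b*c*d*t^2)*((q^2 - a*b*c*d*t^2)*(1 - a*b*c*d*t^2))) - (a*(1 - b*c*t)*(1 - b*d*t)*(1 - c*d*t)*(1 - q*t))*(a*q*(q^2 - a*b*c*d*t^2)) - ((q^2 - a*b*c*d*t)*(q - a*b*t)*(q - a*c*t)*(q - a*d*t))*(1 - a*b*c*d*t^2))*(((q + a*b*c*d)*(2*q - q*q - 1)) - ((1 - q)*(1 - a*b*c*d)*q + (q - 1)*(q^2 - a*b*c*d)))*t - ((2*q - q*q - 1)*((a+b+c+d)*q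 + (a*b*c+a*b*d+a*c*d+b*c*d)))*(a*q*t*((q - a*b*c*d*t^2)*((q^2 - a*b*c*d*t^2)*(1 - a*b*c*d*t^2)))))*Lu
    - ((lamt q a b c d t)*(t*q)*(a*q*t*((q - a*b*c*d*t^2)*((q^2 - a*b*c*d*t^2)*(1 - a*b*c*d*t^2)))))*hb1 - (a*q*t^2*((q - a*b*c*d*t^2)*((q^2 - a*b*c*d*t^2)*(1 - a*b*c*d*t^2))))*hb0
end Frak

theorem La_acts_triangularly_on_powers_of_lambda
    (q : ℝ) (hq0 : 0 < q) (hq1 : q < 1)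
    (a b c d : ℂ) (ha : a ≠ 0) (hb : b ≠ 0) (hc : c ≠ 0) (hd : d ≠ 0)
    (j : ℕ) :
    ∃ P : Polynomial ℂ, P.degree < (j : WithBot ℕ) ∧
      ∀ t : ℂ, t ≠ 0 → 1 - a * b * c * d * t ^ 2 ≠ 0 →
        1 - a * b * c * d * t ^ 2 / (q : ℂ) ≠ 0 →
        1 - a * b * c * d * t ^ 2 / (q : ℂ) ^ 2 ≠ 0 →
        Acoef (q : ℂ) a b c d t * lamt (q : ℂ) a b c d ((q : ℂ) * t) ^ j +
            Bcoef (q : ℂ) a b c d t * lamt (q : ℂ) a b c d t ^ j +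
            Ccoef (q : ℂ) a b c d t * lamt (q : ℂ) a b c d (t / (q : ℂ)) ^ j =
          (a * (q : ℂ) ^ (-(j : ℤ) - 1) + (q : ℂ) ^ ((j : ℤ) + 1) / a) *
              lamt (q : ℂ) a b c d t ^ j +
            Polynomial.eval (lamt (q : ℂ) a b c d t) P := by
  have hq : (q : ℂ) ≠ 0 := Complex.ofReal_ne_zero.mpr hq0.ne'
  suffices H : ∀ n : ℕ, (∃ P : Polynomial ℂ, P.degree < ((n : ℕ) : WithBot ℕ) ∧
      ∀ t : ℂ, t ≠ 0 → 1 - a * b * c * d * t ^ 2 ≠ 0 →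
        1 - a * b * c * d * t ^ 2 / (q : ℂ) ≠ 0 →
        1 - a * b * c * d * t ^ 2 / (q : ℂ) ^ 2 ≠ 0 →
        Acoef (q : ℂ) a b c d t * lamt (q : ℂ) a b c d ((q : ℂ) * t) ^ (n) +
            Bcoef (q : ℂ) a b c d t * lamt (q : ℂ) a b c d t ^ (n) +
            Ccoef (q : ℂ) a b c d t * lamt (q : ℂ) a b c d (t / (q : ℂ)) ^ (n) =
          (a * (q : ℂ) ^ (-(((n) : ℕ) : ℤ) - 1) + (q : ℂ) ^ ((((n) : ℕ) : ℤ) + 1) / a) *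
              lamt (q : ℂ) a b c d t ^ (n) +
            Polynomial.eval (lamt (q : ℂ) a b c d t) P) ∧ (∃ P : Polynomial ℂ, P.degree < ((n+1 : ℕ) : WithBot ℕ) ∧
      ∀ t : ℂ, t ≠ 0 → 1 - a * b * c * d * t ^ 2 ≠ 0 →
        1 - a * b * c * d * t ^ 2 / (q : ℂ) ≠ 0 →
        1 - a * b * c * d * t ^ 2 / (q : ℂ) ^ 2 ≠ 0 →
        Acoef (q : ℂ) a b c d t * lamt (q : ℂ) a b c d ((q : ℂ) * t) ^ (n+1) +
            Bcoef (q : ℂ) a b c d t * lamt (q : ℂ) a b c d t ^ (n+1) +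
            Ccoef (q : ℂ) a b c d t * lamt (q : ℂ) a b c d (t / (q : ℂ)) ^ (n+1) =
          (a * (q : ℂ) ^ (-(((n+1) : ℕ) : ℤ) - 1) + (q : ℂ) ^ ((((n+1) : ℕ) : ℤ) + 1) / a) *
              lamt (q : ℂ) a b c d t ^ (n+1) +
            Polynomial.eval (lamt (q : ℂ) a b c d t) P) by
    exact (H j).1
  have claim0 : ∃ P : Polynomial ℂ, P.degree < ((0 : ℕ) : WithBot ℕ) ∧
      ∀ t : ℂ, t ≠ 0 → 1 - a * b * c * d * t ^ 2 ≠ 0 →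
        1 - a * b * c * d * t ^ 2 / (q : ℂ) ≠ 0 →
        1 - a * b * c * d * t ^ 2 / (q : ℂ) ^ 2 ≠ 0 →
        Acoef (q : ℂ) a b c d t * lamt (q : ℂ) a b c d ((q : ℂ) * t) ^ (0) +
            Bcoef (q : ℂ) a b c d t * lamt (q : ℂ) a b c d t ^ (0) +
            Ccoef (q : ℂ) a b c d t * lamt (q : ℂ) a b c d (t / (q : ℂ)) ^ (0) =
          (a * (q : ℂ) ^ (-(((0) : ℕ) : ℤ) - 1) + (q : ℂ) ^ ((((0) : ℕ) : ℤ) + 1) / a) *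
              lamt (q : ℂ) a b c d t ^ (0) +
            Polynomial.eval (lamt (q : ℂ) a b c d t) P := by
    refine ⟨0, ?_, ?_⟩
    · rw [Polynomial.degree_zero]
      exact WithBot.bot_lt_coe _
    · intro t ht h1 h2 h3
      simp only [pow_zero, mul_one, Polynomial.eval_zero, add_zero]
      rw [AWdnat (q:ℂ) a 0]
      unfold Bcoef
      ring
  have claim1 : ∃ P : Polynomial ℂ, P.degree < ((1 : ℕ) : WithBot ℕ) ∧
      ∀ t : ℂ, t ≠ 0 → 1 - a * b * c * d * t ^ 2 ≠ 0 →
        1 - a * b * c * d * t ^ 2 / (q : ℂ) ≠ 0 →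
        1 - a * b * c * d * t ^ 2 / (q : ℂ) ^ 2 ≠ 0 →
        Acoef (q : ℂ) a b c d t * lamt (q : ℂ) a b c d ((q : ℂ) * t) ^ (1) +
            Bcoef (q : ℂ) a b c d t * lamt (q : ℂ) a b c d t ^ (1) +
            Ccoef (q : ℂ) a b c d t * lamt (q : ℂ) a b c d (t / (q : ℂ)) ^ (1) =
          (a * (q : ℂ) ^ (-(((1) : ℕ) : ℤ) - 1) + (q : ℂ) ^ ((((1) : ℕ) : ℤ) + 1) / a) *
              lamt (q : ℂ) a b c d t ^ (1) +
            Polynomial.eval (lamt (q : ℂ) a b c d t) P := by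
    refine ⟨Polynomial.C (((1 - (q:ℂ))*(-(q:ℂ)^4 + (b+c+d)*a*(q:ℂ)^3 + b*c*d*(1 - (q:ℂ))*a*(q:ℂ)^2 + a^2*(1 - (q:ℂ))*(q:ℂ) - a^2*(b*c+b*d+c*d)*(q:ℂ) + a^3*b*c*d))/(a*(q:ℂ)^3)), ?_, ?_⟩
    · exact lt_of_le_of_lt Polynomial.degree_C_le (by exact_mod_cast Nat.zero_lt_one)
    · intro t ht h1 h2 h3
      have H3 := lemI3 (q:ℂ) a b c d t hq ha ht h1 h2 h3
      simp only [pow_one, Polynomial.eval_C]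
      rw [AWdnat (q:ℂ) a 1]
      rw [show a/(q:ℂ)^(1+1) + (q:ℂ)^(1+1)/a = (a*a + (q:ℂ)^2*(q:ℂ)^2)/((q:ℂ)^2*a) from by
        rw [div_add_div _ _ (pow_ne_zero _ hq) ha]]
      exact H3
  have step : ∀ n : ℕ, (∃ P : Polynomial ℂ, P.degree < ((n : ℕ) : WithBot ℕ) ∧
      ∀ t : ℂ, t ≠ 0 → 1 - a * b * c * d * t ^ 2 ≠ 0 →
        1 - a * b * c * d * t ^ 2 / (q : ℂ) ≠ 0 →
        1 - a * b * c * d * t ^ 2 / (q : ℂ) ^ 2 ≠ 0 →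
        Acoef (q : ℂ) a b c d t * lamt (q : ℂ) a b c d ((q : ℂ) * t) ^ (n) +
            Bcoef (q : ℂ) a b c d t * lamt (q : ℂ) a b c d t ^ (n) +
            Ccoef (q : ℂ) a b c d t * lamt (q : ℂ) a b c d (t / (q : ℂ)) ^ (n) =
          (a * (q : ℂ) ^ (-(((n) : ℕ) : ℤ) - 1) + (q : ℂ) ^ ((((n) : ℕ) : ℤ) + 1) / a) *
              lamt (q : ℂ) a b c d t ^ (n) +
            Polynomial.eval (lamt (q : ℂ) a b c d t) P) → (∃ P : Polynomial ℂ, P.degree < ((n+1 : ℕ) : WithBot ℕ) ∧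
      ∀ t : ℂ, t ≠ 0 → 1 - a * b * c * d * t ^ 2 ≠ 0 →
        1 - a * b * c * d * t ^ 2 / (q : ℂ) ≠ 0 →
        1 - a * b * c * d * t ^ 2 / (q : ℂ) ^ 2 ≠ 0 →
        Acoef (q : ℂ) a b c d t * lamt (q : ℂ) a b c d ((q : ℂ) * t) ^ (n+1) +
            Bcoef (q : ℂ) a b c d t * lamt (q : ℂ) a b c d t ^ (n+1) +
            Ccoef (q : ℂ) a b c d t * lamt (q : ℂ) a b c d (t / (q : ℂ)) ^ (n+1) =
          (a * (q : ℂ) ^ (-(((n+1) : ℕ) : ℤ) - 1) + (q : ℂ) ^ ((((n+1) : ℕ) : ℤ) + 1) / a) *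
              lamt (q : ℂ) a b c d t ^ (n+1) +
            Polynomial.eval (lamt (q : ℂ) a b c d t) P) → (∃ P : Polynomial ℂ, P.degree < ((n+2 : ℕ) : WithBot ℕ) ∧
      ∀ t : ℂ, t ≠ 0 → 1 - a * b * c * d * t ^ 2 ≠ 0 →
        1 - a * b * c * d * t ^ 2 / (q : ℂ) ≠ 0 →
        1 - a * b * c * d * t ^ 2 / (q : ℂ) ^ 2 ≠ 0 →
        Acoef (q : ℂ) a b c d t * lamt (q : ℂ) a b c d ((q : ℂ) * t) ^ (n+2) +
            Bcoef (q : ℂ) a b c d t * lamt (q : ℂ) a b c d t ^ (n+2) +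
            Ccoef (q : ℂ) a b c d t * lamt (q : ℂ) a b c d (t / (q : ℂ)) ^ (n+2) =
          (a * (q : ℂ) ^ (-(((n+2) : ℕ) : ℤ) - 1) + (q : ℂ) ^ ((((n+2) : ℕ) : ℤ) + 1) / a) *
              lamt (q : ℂ) a b c d t ^ (n+2) +
            Polynomial.eval (lamt (q : ℂ) a b c d t) P) := by
    intro n Cn Cn1
    obtain ⟨P0, hP0d, hP0⟩ := Cn
    obtain ⟨P1, hP1d, hP1⟩ := Cn1
    refine ⟨Polynomial.C (((q:ℂ)^2+1)/(q:ℂ)) * Polynomial.X * P1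
        + Polynomial.C (((1 - (q:ℂ))*(1 - a*b*c*d)*(q:ℂ) + ((q:ℂ) - 1)*((q:ℂ)^2 - a*b*c*d))/(q:ℂ)^2) * P1
        - (Polynomial.C 1 * Polynomial.X^2 + Polynomial.C ((((q:ℂ) + a*b*c*d)*(2*(q:ℂ) - (q:ℂ)*(q:ℂ) - 1))/(q:ℂ)^2) * Polynomial.X
            + Polynomial.C (((1 - (q:ℂ))*((q:ℂ) - 1)*(1 - a*b*c*d)*((q:ℂ)^2 - a*b*c*d))/(q:ℂ)^3)) * P0
        + Polynomial.C ((((1 - (q:ℂ))*(1 - a*b*c*d)*(q:ℂ) + ((q:ℂ) - 1)*((q:ℂ)^2 - a*b*c*d))/(q:ℂ)^2)*(a/(q:ℂ)^(n+1+1) + (q:ℂ)^(n+1+1)/a)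
            - ((((q:ℂ) + a*b*c*d)*(2*(q:ℂ) - (q:ℂ)*(q:ℂ) - 1))/(q:ℂ)^2)*(a/(q:ℂ)^(n+1) + (q:ℂ)^(n+1)/a)
            + ((2*(q:ℂ) - (q:ℂ)*(q:ℂ) - 1)*((a+b+c+d)*(q:ℂ) + (a*b*c+a*b*d+a*c*d+b*c*d)))/(q:ℂ)^2) * Polynomial.X^(n+1)
        + Polynomial.C (((1 - (q:ℂ))^2*((a*b*c+a*b*d+a*c*d+b*c*d) - (a+b+c+d))*((q:ℂ)^2 - a*b*c*d))/(q:ℂ)^3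
            - (((1 - (q:ℂ))*((q:ℂ) - 1)*(1 - a*b*c*d)*((q:ℂ)^2 - a*b*c*d))/(q:ℂ)^3)*(a/(q:ℂ)^(n+1) + (q:ℂ)^(n+1)/a)) * Polynomial.X^n,
      ?_, ?_⟩
    · have b1 := AWdegMulLt (Polynomial.C (((q:ℂ)^2+1)/(q:ℂ)) * Polynomial.X) P1 1 (n+1)
        (Polynomial.degree_C_mul_X_le _) hP1d
      rw [show 1+(n+1) = n+2 from by omega] at b1
      have b2 := AWdegMulLt (Polynomial.C (((1 - (q:ℂ))*(1 - a*b*c*d)*(q:ℂ) + ((q:ℂ) - 1)*((q:ℂ)^2 - a*b*c*d))/(q:ℂ)^2)) P1 0 (n+1)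
        Polynomial.degree_C_le hP1d
      rw [show 0+(n+1) = n+1 from by omega] at b2
      have b2' : (Polynomial.C (((1 - (q:ℂ))*(1 - a*b*c*d)*(q:ℂ) + ((q:ℂ) - 1)*((q:ℂ)^2 - a*b*c*d))/(q:ℂ)^2) * P1).degree < ((n+2 : ℕ) : WithBot ℕ) :=
        lt_trans b2 (by exact_mod_cast (by omega : n+1 < n+2))
      have b3 := AWdegMulLt (Polynomial.C 1 * Polynomial.X^2
          + Polynomial.C ((((q:ℂ) + a*b*c*d)*(2*(q:ℂ) - (q:ℂ)*(q:ℂ) - 1))/(q:ℂ)^2) * Polynomial.X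
          + Polynomial.C (((1 - (q:ℂ))*((q:ℂ) - 1)*(1 - a*b*c*d)*((q:ℂ)^2 - a*b*c*d))/(q:ℂ)^3)) P0 2 n Polynomial.degree_quadratic_le hP0d
      rw [show 2+n = n+2 from by omega] at b3
      have b4 : (Polynomial.C ((((1 - (q:ℂ))*(1 - a*b*c*d)*(q:ℂ) + ((q:ℂ) - 1)*((q:ℂ)^2 - a*b*c*d))/(q:ℂ)^2)*(a/(q:ℂ)^(n+1+1) + (q:ℂ)^(n+1+1)/a)
            - ((((q:ℂ) + a*b*c*d)*(2*(q:ℂ) - (q:ℂ)*(q:ℂ) - 1))/(q:ℂ)^2)*(a/(q:ℂ)^(n+1) + (q:ℂ)^(n+1)/a)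
            + ((2*(q:ℂ) - (q:ℂ)*(q:ℂ) - 1)*((a+b+c+d)*(q:ℂ) + (a*b*c+a*b*d+a*c*d+b*c*d)))/(q:ℂ)^2) * Polynomial.X^(n+1)).degree < ((n+2:ℕ) : WithBot ℕ) :=
        lt_of_le_of_lt (Polynomial.degree_C_mul_X_pow_le _ _)
          (by exact_mod_cast (by omega : n+1 < n+2))
      have b5 : (Polynomial.C (((1 - (q:ℂ))^2*((a*b*c+a*b*d+a*c*d+b*c*d) - (a+b+c+d))*((q:ℂ)^2 - a*b*c*d))/(q:ℂ)^3
            - (((1 - (q:ℂ))*((q:ℂ) - 1)*(1 - a*b*c*d)*((q:ℂ)^2 - a*b*c*d))/(q:ℂ)^3)*(a/(q:ℂ)^(n+1) + (q:ℂ)^(n+1)/a)) * Polynomial.X^n).degree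
          < ((n+2:ℕ) : WithBot ℕ) :=
        lt_of_le_of_lt (Polynomial.degree_C_mul_X_pow_le _ _)
          (by exact_mod_cast (by omega : n < n+2))
      exact lt_of_le_of_lt (Polynomial.degree_add_le _ _) (max_lt
        (lt_of_le_of_lt (Polynomial.degree_add_le _ _) (max_lt
          (lt_of_le_of_lt (Polynomial.degree_sub_le _ _) (max_lt
            (lt_of_le_of_lt (Polynomial.degree_add_le _ _) (max_lt b1 b2')) b3)) b4)) b5)
    · intro t ht h1 h2 h3
      have hG0 := hP0 t ht h1 h2 h3
      have hG1 := hP1 t ht h1 h2 h3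
      rw [AWdnat (q:ℂ) a n] at hG0
      rw [AWdnat (q:ℂ) a (n+1)] at hG1
      rw [AWdnat (q:ℂ) a (n+2)]
      have hI1 := lemI1 (q:ℂ) a b c d t hq ht
      have hI2 := lemI2 (q:ℂ) a b c d t hq ht
      have hI4 := lemI4 (q:ℂ) a b c d t hq ha ht h1 h2 h3
      have hd := AWdrec (q:ℂ) a ((q:ℂ)^n) hq ha (pow_ne_zero n hq)
      simp only [Polynomial.eval_add, Polynomial.eval_sub, Polynomial.eval_mul,
        Polynomial.eval_pow, Polynomial.eval_C, Polynomial.eval_X, Polynomial.eval_one]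
      linear_combination
        (Acoef (q:ℂ) a b c d t * (lamt (q:ℂ) a b c d ((q:ℂ)*t)) ^ (n+1) + Ccoef (q:ℂ) a b c d t * (lamt (q:ℂ) a b c d (t/(q:ℂ))) ^ (n+1)) * hI1
        - (Acoef (q:ℂ) a b c d t * (lamt (q:ℂ) a b c d ((q:ℂ)*t)) ^ n + Ccoef (q:ℂ) a b c d t * (lamt (q:ℂ) a b c d (t/(q:ℂ))) ^ n) * hI2
        + ((lamt (q:ℂ) a b c d t) ^ n) * hI4
        + (((q:ℂ)^2+1)/(q:ℂ) * (lamt (q:ℂ) a b c d t) + ((1 - (q:ℂ))*(1 - a*b*c*d)*(q:ℂ) + ((q:ℂ) - 1)*((q:ℂ)^2 - a*b*c*d))/(q:ℂ)^2) * hG1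
        - ((lamt (q:ℂ) a b c d t)^2 + (((q:ℂ) + a*b*c*d)*(2*(q:ℂ) - (q:ℂ)*(q:ℂ) - 1))/(q:ℂ)^2 * (lamt (q:ℂ) a b c d t) + ((1 - (q:ℂ))*((q:ℂ) - 1)*(1 - a*b*c*d)*((q:ℂ)^2 - a*b*c*d))/(q:ℂ)^3) * hG0
        + ((lamt (q:ℂ) a b c d t) ^ (n+2)) * hd
  intro n
  induction n with
  | zero => exact ⟨claim0, claim1⟩
  | succ m ih => exact ⟨ih.2, step m ih.1 ih.2⟩
end

section
/- Let K ≥ 1 and N ≥ 0 be integers. Let Q = Σ_{l=0}^{K} Q^{(−l)}(n) E^{−l} be a difference operator acting on functions f: ℤ → ℂ by (Qf)(n) = Σ_{l=0}^{K} Q^{(−l)}(n) f(n−l), with Q^{(0)}(n) ≠ 0 and Q^{(−K)}(n) ≠ 0 for all n ∈ ℤ. Let M = Σ_{i=−N}^{N} M^{(i)}(n) E^{i} be any difference operator (acting by (Mf)(n) = Σ_{i=−N}^{N} M^{(i)}(n) f(n+i)) such that Mf lies in the kernel of Q whenever f does, i.e. M(ker Q) ⊆ ker Q. Then there exist functions L̂^{(i)}: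 ℤ → ℂ, −N ≤ i ≤ N, such that Σ_{i=−N}^{N} L̂^{(i)}(n)·(Qf)(n+i) = (Q(Mf))(n) for every f: ℤ → ℂ and every n ∈ ℤ; that is, there is a difference operator L̂ with the same support as M satisfying L̂Q = QM. (The intertwining step (4.7) used to produce the difference operators L̂^f_n.) -/
open scoped BigOperators


noncomputable def Fk (K : ℕ) (Qc : ℕ → ℤ → ℂ) (a : ℤ) (v : ℤ → ℂ) : ℤ → ℂ
  | m =>
    if m < a then
      -(∑ l ∈ (Finset.range K).attach, Qc l.1 (m + K) * Fk K Qc a v (m + K - l.1)) / Qc K (m + K)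
    else if m < a + K then v m
    else -(∑ l ∈ (Finset.range K).attach, Qc (l.1 + 1) m * Fk K Qc a v (m - (l.1 + 1))) / Qc 0 m
termination_by m => (if m < a then a - m else m - (a + K) + 1).toNat
decreasing_by
  · have hl := l.2; simp only [Finset.mem_range] at hl; simp only [m] at *; split_ifs <;> omega
  · have hl := l.2; simp only [Finset.mem_range] at hl; simp only [m] at *; split_ifs <;> omega

lemma Fk_window (K : ℕ) (Qc : ℕ → ℤ → ℂ) (a : ℤ) (v : ℤ → ℂ) (m : ℤ)
    (h1 : a ≤ m) (h2 : m < a + K) : Fk K Qc a v m = v m := by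
  rw [Fk]
  rw [if_neg (by omega), if_pos h2]

lemma Fk_ker (K : ℕ) (Qc : ℕ → ℤ → ℂ) (hQ0 : ∀ n : ℤ, Qc 0 n ≠ 0) (hQK : ∀ n : ℤ, Qc K n ≠ 0)
    (a : ℤ) (v : ℤ → ℂ) (m : ℤ) :
    ∑ l ∈ Finset.range (K + 1), Qc l m * Fk K Qc a v (m - l) = 0 := by
  by_cases hm : a + K ≤ m
  · -- use the defining equation at m (third branch)
    rw [Finset.sum_range_succ']
    have hm' : Fk K Qc a v m = -(∑ l ∈ (Finset.range K).attach,
        Qc (l.1 + 1) m * Fk K Qc a v (m - (l.1 + 1))) / Qc 0 m := by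
      rw [Fk]; rw [if_neg (by omega), if_neg (by omega)]
    simp only [Nat.cast_zero, sub_zero] at *
    rw [hm', Finset.sum_attach (Finset.range K) (fun l => Qc (l + 1) m * Fk K Qc a v (m - (l + 1)))] at *
    push_cast
    field_simp
    rw [div_self (hQ0 m)]
    ring
  · -- use the defining equation at m - K (first branch)
    rw [Finset.sum_range_succ]
    have hm' : Fk K Qc a v (m - K) = -(∑ l ∈ (Finset.range K).attach,
        Qc l.1 (m - K + K) * Fk K Qc a v (m - K + K - l.1)) / Qc K (m - K + K) := by
      rw [Fk]; rw [if_pos (by omega)]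
    have e : m - (K:ℤ) + K = m := by ring
    rw [e] at hm'
    rw [hm', Finset.sum_attach (Finset.range K) (fun l => Qc l m * Fk K Qc a v (m - l))]
    field_simp
    rw [div_self (hQK m)]
    ring

noncomputable def Ac (K N : ℕ) (Qc : ℕ → ℤ → ℂ) (Mc : ℤ → ℤ → ℂ) (j n : ℤ) : ℂ :=
  ∑ l ∈ Finset.range (K + 1),
    if j + l ∈ Finset.Icc (-(N : ℤ)) N then Qc l n * Mc (j + l) (n - l) else 0

noncomputable def Lrec (K N : ℕ) (Qc : ℕ → ℤ → ℂ) (Mc : ℤ → ℤ → ℂ) : ℕ → ℤ → ℂ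
  | k, n =>
    (Ac K N Qc Mc ((N : ℤ) - k) n -
      ∑ l ∈ (Finset.range (min k K)).attach,
        Lrec K N Qc Mc (k - (l.1 + 1)) n * Qc (l.1 + 1) (n + (((N : ℤ) - k) + (l.1 + 1)))) /
      Qc 0 (n + ((N : ℤ) - k))
termination_by k => k
decreasing_by have hl := l.2; simp only [Finset.mem_range] at hl; omega

noncomputable def LcD (K N : ℕ) (Qc : ℕ → ℤ → ℂ) (Mc : ℤ → ℤ → ℂ) (i n : ℤ) : ℂ :=
  if i ∈ Finset.Icc (-(N : ℤ)) N then Lrec K N Qc Mc ((N : ℤ) - i).toNat n else 0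

noncomputable def Bc (K N : ℕ) (Qc : ℕ → ℤ → ℂ) (Mc : ℤ → ℤ → ℂ) (j n : ℤ) : ℂ :=
  ∑ l ∈ Finset.range (K + 1),
    if j + l ∈ Finset.Icc (-(N : ℤ)) N then
      LcD K N Qc Mc (j + l) n * Qc l (n + (j + l)) else 0

lemma reindex (N K : ℕ) (l : ℕ) (hl : l ≤ K) (g h : ℤ → ℂ) :
    ∑ i ∈ Finset.Icc (-(N : ℤ)) N, g i * h (i - l)
      = ∑ j ∈ Finset.Icc (-(N : ℤ) - K) N,
          (if j + l ∈ Finset.Icc (-(N : ℤ)) N then g (j + l) else 0) * h j := by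
  symm
  calc ∑ j ∈ Finset.Icc (-(N : ℤ) - K) N,
          (if j + l ∈ Finset.Icc (-(N : ℤ)) N then g (j + l) else 0) * h j
      = ∑ j ∈ (Finset.Icc (-(N : ℤ) - K) N).filter
          (fun j : ℤ => j + (l : ℤ) ∈ Finset.Icc (-(N : ℤ)) N), g (j + l) * h j := by
        rw [Finset.sum_filter]
        refine Finset.sum_congr rfl (fun j _ => ?_)
        split <;> simp
    _ = ∑ i ∈ Finset.Icc (-(N : ℤ)) N, g i * h (i - l) := by
        refine Finset.sum_nbij' (fun j : ℤ => j + (l : ℤ)) (fun i : ℤ => i - (l : ℤ)) ?_ ?_ ?_ ?_ ?_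
        · intro j hj
          simp only [Finset.mem_filter, Finset.mem_Icc] at hj ⊢; omega
        · intro i hi
          simp only [Finset.mem_filter, Finset.mem_Icc] at hi ⊢; omega
        · intro j _; ring
        · intro i _; ring
        · intro j _; rw [add_sub_cancel_right]

lemma expandA (K N : ℕ) (Qc : ℕ → ℤ → ℂ) (Mc : ℤ → ℤ → ℂ) (f : ℤ → ℂ) (n : ℤ) :
    ∑ l ∈ Finset.range (K + 1), Qc l n *
        (∑ i ∈ Finset.Icc (-(N : ℤ)) (N : ℤ), Mc i (n - l) * f (n - l + i))
      = ∑ j ∈ Finset.Icc (-(N : ℤ) - K) N, Ac K N Qc Mc j n * f (n + j) := by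
  have step : ∀ l ∈ Finset.range (K + 1), Qc l n *
      (∑ i ∈ Finset.Icc (-(N : ℤ)) (N : ℤ), Mc i (n - l) * f (n - l + i))
      = ∑ j ∈ Finset.Icc (-(N : ℤ) - K) N,
          (if j + l ∈ Finset.Icc (-(N : ℤ)) N then Qc l n * Mc (j + l) (n - l) else 0) * f (n + j) := by
    intro l hl
    have hl' : l ≤ K := by
      have := Finset.mem_range.mp hl; omega
    rw [show (∑ i ∈ Finset.Icc (-(N : ℤ)) (N : ℤ), Mc i (n - l) * f (n - l + i))
        = ∑ i ∈ Finset.Icc (-(N : ℤ)) (N : ℤ),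
            (fun i => Mc i (n - l)) i * (fun j => f (n + j)) (i - l) from
      Finset.sum_congr rfl (fun i _ => by
        simp only
        rw [show n - l + i = n + (i - (l : ℤ)) by ring])]
    rw [reindex N K l hl' (fun i => Mc i (n - l)) (fun j => f (n + j)), Finset.mul_sum]
    refine Finset.sum_congr rfl fun j _ => ?_
    split <;> ring
  rw [Finset.sum_congr rfl step, Finset.sum_comm]
  refine Finset.sum_congr rfl fun j _ => ?_
  rw [Ac, Finset.sum_mul]

lemma expandB (K N : ℕ) (Qc : ℕ → ℤ → ℂ) (Mc : ℤ → ℤ → ℂ) (f : ℤ → ℂ) (n : ℤ) :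
    ∑ i ∈ Finset.Icc (-(N : ℤ)) (N : ℤ), LcD K N Qc Mc i n *
        (∑ l ∈ Finset.range (K + 1), Qc l (n + i) * f (n + i - l))
      = ∑ j ∈ Finset.Icc (-(N : ℤ) - K) N, Bc K N Qc Mc j n * f (n + j) := by
  have lhs : ∑ i ∈ Finset.Icc (-(N : ℤ)) (N : ℤ), LcD K N Qc Mc i n *
        (∑ l ∈ Finset.range (K + 1), Qc l (n + i) * f (n + i - l))
      = ∑ l ∈ Finset.range (K + 1), ∑ i ∈ Finset.Icc (-(N : ℤ)) (N : ℤ),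
          (fun i => LcD K N Qc Mc i n * Qc l (n + i)) i * (fun j => f (n + j)) (i - l) := by
    simp only [Finset.mul_sum]
    rw [Finset.sum_comm]
    refine Finset.sum_congr rfl fun l _ => Finset.sum_congr rfl fun i _ => ?_
    show LcD K N Qc Mc i n * (Qc l (n + i) * f (n + i - l)) = _
    rw [show n + i - (l : ℤ) = n + (i - (l : ℤ)) by ring]
    ring
  rw [lhs]
  have step : ∀ l ∈ Finset.range (K + 1),
      (∑ i ∈ Finset.Icc (-(N : ℤ)) (N : ℤ),
          (fun i => LcD K N Qc Mc i n * Qc l (n + i)) i * (fun j => f (n + j)) (i - l))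
      = ∑ j ∈ Finset.Icc (-(N : ℤ) - K) N,
          (if j + l ∈ Finset.Icc (-(N : ℤ)) N then
            LcD K N Qc Mc (j + l) n * Qc l (n + (j + l)) else 0) * f (n + j) := by
    intro l hl
    have hl' : l ≤ K := by
      have := Finset.mem_range.mp hl; omega
    exact reindex N K l hl' (fun i => LcD K N Qc Mc i n * Qc l (n + i)) (fun j => f (n + j))
  rw [Finset.sum_congr rfl step, Finset.sum_comm]
  refine Finset.sum_congr rfl fun j _ => ?_
  rw [Bc, Finset.sum_mul]

lemma BA_mid (K N : ℕ) (Qc : ℕ → ℤ → ℂ) (Mc : ℤ → ℤ → ℂ) (hQ0 : ∀ n : ℤ, Qc 0 n ≠ 0)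
    (n j : ℤ) (hj1 : -(N : ℤ) ≤ j) (hj2 : j ≤ N) :
    Bc K N Qc Mc j n = Ac K N Qc Mc j n := by
  set k : ℕ := ((N : ℤ) - j).toNat with hk
  have hjk : ((N : ℤ) - k) = j := by omega
  rw [Bc, Finset.sum_range_succ']
  simp only [Nat.cast_zero, add_zero, Nat.cast_add, Nat.cast_one]
  rw [if_pos (by simp only [Finset.mem_Icc]; omega)]
  have hLj : LcD K N Qc Mc j n = Lrec K N Qc Mc k n := by
    rw [LcD, if_pos (by simp only [Finset.mem_Icc]; omega), ← hk]
  rw [hLj, Lrec, hjk]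
  rw [div_mul_cancel₀ _ (hQ0 (n + j))]
  rw [Finset.sum_attach (Finset.range (min k K))
    (fun l => Lrec K N Qc Mc (k - (l + 1)) n * Qc (l + 1) (n + (j + ((l : ℤ) + 1))))]
  have hrest : ∑ l ∈ Finset.range K,
      (if j + ((l : ℤ) + 1) ∈ Finset.Icc (-(N : ℤ)) N then
        LcD K N Qc Mc (j + ((l : ℤ) + 1)) n * Qc (l + 1) (n + (j + ((l : ℤ) + 1))) else 0)
      = ∑ l ∈ Finset.range (min k K),
          Lrec K N Qc Mc (k - (l + 1)) n * Qc (l + 1) (n + (j + ((l : ℤ) + 1))) := by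
    rw [← Finset.sum_subset (Finset.range_subset_range.mpr (min_le_right k K))
      (fun x hx hx2 => ?_)]
    · refine Finset.sum_congr rfl fun l hl => ?_
      have hl' : l < min k K := Finset.mem_range.mp hl
      rw [if_pos (by simp only [Finset.mem_Icc]; omega)]
      have : LcD K N Qc Mc (j + ((l : ℤ) + 1)) n = Lrec K N Qc Mc (k - (l + 1)) n := by
        rw [LcD, if_pos (by simp only [Finset.mem_Icc]; omega)]
        congr 1
        omega
      rw [this]
    · have h1 : x < K := Finset.mem_range.mp hx
      have h2 : ¬ x < min k K := fun h => hx2 (Finset.mem_range.mpr h)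
      rw [if_neg (by simp only [Finset.mem_Icc]; omega)]
  rw [hrest]
  ring

lemma BA_low (K N : ℕ) (Qc : ℕ → ℤ → ℂ) (Mc : ℤ → ℤ → ℂ)
    (hQ0 : ∀ n : ℤ, Qc 0 n ≠ 0) (hQK : ∀ n : ℤ, Qc K n ≠ 0)
    (hker : ∀ f : ℤ → ℂ,
      (∀ n : ℤ, ∑ l ∈ Finset.range (K + 1), Qc l n * f (n - l) = 0) →
      ∀ n : ℤ, ∑ l ∈ Finset.range (K + 1), Qc l n *
        (∑ i ∈ Finset.Icc (-(N : ℤ)) (N : ℤ), Mc i (n - l) * f (n - l + i)) = 0)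
    (n j : ℤ) (hj1 : -(N : ℤ) - K ≤ j) (hj2 : j < -(N : ℤ)) :
    Bc K N Qc Mc j n = Ac K N Qc Mc j n := by
  set a : ℤ := n - N - K with ha
  set v : ℤ → ℂ := fun m => if m = n + j then 1 else 0 with hv
  set f : ℤ → ℂ := Fk K Qc a v with hfdef
  have hf : ∀ m : ℤ, ∑ l ∈ Finset.range (K + 1), Qc l m * f (m - l) = 0 :=
    Fk_ker K Qc hQ0 hQK a v
  have hA : ∑ j' ∈ Finset.Icc (-(N : ℤ) - K) N, Ac K N Qc Mc j' n * f (n + j') = 0 := by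
    rw [← expandA]; exact hker f hf n
  have hB : ∑ j' ∈ Finset.Icc (-(N : ℤ) - K) N, Bc K N Qc Mc j' n * f (n + j') = 0 := by
    rw [← expandB]
    refine Finset.sum_eq_zero fun i _ => ?_
    rw [hf (n + i), mul_zero]
  have hsum : ∑ j' ∈ Finset.Icc (-(N : ℤ) - K) N,
      (Ac K N Qc Mc j' n - Bc K N Qc Mc j' n) * f (n + j') = 0 := by
    simp only [sub_mul]
    rw [Finset.sum_sub_distrib, hA, hB, sub_zero]
  have hmem : j ∈ Finset.Icc (-(N : ℤ) - K) N := by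
    simp only [Finset.mem_Icc]
    constructor
    · omega
    · omega
  have key : ∀ j' ∈ Finset.Icc (-(N : ℤ) - K) N, j' ≠ j →
      (Ac K N Qc Mc j' n - Bc K N Qc Mc j' n) * f (n + j') = 0 := by
    intro j' hj' hne
    simp only [Finset.mem_Icc] at hj'
    rcases le_or_gt (-(N : ℤ)) j' with h | h
    · rw [BA_mid K N Qc Mc hQ0 n j' h hj'.2, sub_self, zero_mul]
    · have hz : f (n + j') = 0 := by
        rw [hfdef, Fk_window K Qc a v (n + j') (by omega) (by omega), hv]
        simp only
        rw [if_neg (by omega)]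
      rw [hz, mul_zero]
  rw [Finset.sum_eq_single_of_mem j hmem key] at hsum
  have hfj : f (n + j) = 1 := by
    rw [hfdef, Fk_window K Qc a v (n + j) (by omega) (by omega), hv]
    simp only
    simp
  rw [hfj, mul_one] at hsum
  exact (sub_eq_zero.mp hsum).symm


/-- The intertwining step (4.7): if a difference operator `M` preserves the kernel of a
difference operator `Q` with everywhere nonvanishing leading and trailing coefficients, then
there is a difference operator `L̂` with the same support as `M` satisfying `L̂ Q = Q M`. -/
theorem intertwining_difference_operator
    (K : ℕ) (hK : 1 ≤ K) (N : ℕ)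
    (Qc : ℕ → ℤ → ℂ) (hQ0 : ∀ n : ℤ, Qc 0 n ≠ 0) (hQK : ∀ n : ℤ, Qc K n ≠ 0)
    (Mc : ℤ → ℤ → ℂ)
    (hker : ∀ f : ℤ → ℂ,
      (∀ n : ℤ, ∑ l ∈ Finset.range (K + 1), Qc l n * f (n - l) = 0) →
      ∀ n : ℤ, ∑ l ∈ Finset.range (K + 1), Qc l n *
        (∑ i ∈ Finset.Icc (-(N : ℤ)) (N : ℤ), Mc i (n - l) * f (n - l + i)) = 0) :
    ∃ Lc : ℤ → ℤ → ℂ, ∀ (f : ℤ → ℂ) (n : ℤ),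
      ∑ i ∈ Finset.Icc (-(N : ℤ)) (N : ℤ), Lc i n *
          (∑ l ∈ Finset.range (K + 1), Qc l (n + i) * f (n + i - l)) =
        ∑ l ∈ Finset.range (K + 1), Qc l n *
          (∑ i ∈ Finset.Icc (-(N : ℤ)) (N : ℤ), Mc i (n - l) * f (n - l + i)) := by
  refine ⟨LcD K N Qc Mc, fun f n => ?_⟩
  rw [expandB, expandA]
  refine Finset.sum_congr rfl fun j hj => ?_
  simp only [Finset.mem_Icc] at hj
  rcases le_or_gt (-(N : ℤ)) j with h | h
  · rw [BA_mid K N Qc Mc hQ0 n j h hj.2]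
  · rw [BA_low K N Qc Mc hQ0 hQK hker n j hj.1 h]
end

section
/- Let j ∈ ℤ. A Laurent polynomial r ∈ ℂ[t, t^{−1}] satisfies I^{(j)}(r) = r if and only if there exists a polynomial h ∈ ℂ[y] such that r = h(λ_{n−j/2}), where λ_{n−j/2} denotes the Laurent polynomial (q^{j/2}/t − 1)(1 − abcd·q^{−j/2−1} t); in particular λ_{n−j/2} itself is invariant under I^{(j)}. -/
open scoped BigOperators

open AW

section Aux
open Polynomial

lemma decomp_zpow (K : ℂ) (hK : K ≠ 0) (m : ℤ) :
    ∃ f g : Polynomial ℂ, ∀ t : ℂ, t ≠ 0 →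
      t ^ m = f.eval (t + K / t) + t * g.eval (t + K / t) := by
  have pos : ∀ n : ℕ,
      (∃ f g : Polynomial ℂ, ∀ t : ℂ, t ≠ 0 →
        t ^ (n : ℤ) = f.eval (t + K / t) + t * g.eval (t + K / t)) ∧
      (∃ f g : Polynomial ℂ, ∀ t : ℂ, t ≠ 0 →
        t ^ ((n : ℤ) + 1) = f.eval (t + K / t) + t * g.eval (t + K / t)) := by
    intro n
    induction n with
    | zero =>
      constructor
      · exact ⟨1, 0, fun t ht => by simp⟩
      · exact ⟨0, 1, fun t ht => by simp⟩
    | succ n ih =>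
      obtain ⟨⟨f1, g1, h1⟩, ⟨f2, g2, h2⟩⟩ := ih
      refine ⟨⟨f2, g2, fun t ht => by push_cast; exact h2 t ht⟩,
        ⟨X * f2 - C K * f1, X * g2 - C K * g1, fun t ht => ?_⟩⟩
      have e1 := h1 t ht
      have e2 := h2 t ht
      have key : t ^ ((n : ℤ) + 1 + 1) = (t + K / t) * t ^ ((n : ℤ) + 1) - K * t ^ (n : ℤ) := by
        rw [zpow_add₀ ht, zpow_add₀ ht]
        field_simp
        ring
      push_cast
      rw [key, e1, e2]
      simp only [eval_sub, eval_mul, eval_add, eval_X, eval_C]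
      ring
  have neg : ∀ n : ℕ,
      (∃ f g : Polynomial ℂ, ∀ t : ℂ, t ≠ 0 →
        t ^ (-(n : ℤ)) = f.eval (t + K / t) + t * g.eval (t + K / t)) ∧
      (∃ f g : Polynomial ℂ, ∀ t : ℂ, t ≠ 0 →
        t ^ (-(n : ℤ) - 1) = f.eval (t + K / t) + t * g.eval (t + K / t)) := by
    intro n
    induction n with
    | zero =>
      constructor
      · exact ⟨1, 0, fun t ht => by simp⟩
      · refine ⟨C K⁻¹ * X, -C K⁻¹, fun t ht => ?_⟩
        simp only [eval_mul, eval_C, eval_X, eval_neg, zpow_neg, zpow_one]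
        field_simp
        rw [show (-((0:ℕ):ℤ) - 1) = -1 by norm_num, zpow_neg_one, show t⁻¹ * K * t = K by field_simp]
        ring
    | succ n ih =>
      obtain ⟨⟨f1, g1, h1⟩, ⟨f2, g2, h2⟩⟩ := ih
      refine ⟨⟨f2, g2, fun t ht => by
          rw [show (-(((n : ℕ) + 1 : ℕ) : ℤ)) = -(n : ℤ) - 1 by push_cast; ring]
          exact h2 t ht⟩,
        ⟨C K⁻¹ * (X * f2 - f1), C K⁻¹ * (X * g2 - g1), fun t ht => ?_⟩⟩
      have e1 := h1 t ht
      have e2 := h2 t ht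
      have ha1 : t ^ (-(n : ℤ) - 1) = t ^ (-(n : ℤ)) / t := by
        rw [zpow_sub₀ ht, zpow_one]
      have key : t ^ (-(((n : ℕ) + 1 : ℕ) : ℤ) - 1)
          = ((t + K / t) * t ^ (-(n : ℤ) - 1) - t ^ (-(n : ℤ))) / K := by
        rw [show (-(((n : ℕ) + 1 : ℕ) : ℤ) - 1) = -(n : ℤ) - 1 - 1 by push_cast; ring,
          zpow_sub₀ ht, ha1]
        rw [zpow_one]
        generalize t ^ (-(n : ℤ)) = w
        field_simp
        ring
      rw [key, e1, e2]
      simp only [eval_mul, eval_sub, eval_add, eval_X, eval_C]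
      field_simp
      ring
  rcases m with n | n
  · exact (pos n).1
  · have := (neg n).2
    simpa [Int.negSucc_eq, sub_eq_add_neg, add_comm] using this

lemma decomp_laurent (K : ℂ) (hK : K ≠ 0) (p : Polynomial ℂ) (M : ℕ) :
    ∃ f g : Polynomial ℂ, ∀ t : ℂ, t ≠ 0 →
      p.eval t / t ^ M = f.eval (t + K / t) + t * g.eval (t + K / t) := by
  induction p using Polynomial.induction_on' with
  | add p q hp hq =>
    obtain ⟨f1, g1, h1⟩ := hp
    obtain ⟨f2, g2, h2⟩ := hq
    refine ⟨f1 + f2, g1 + g2, fun t ht => ?_⟩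
    have e1 := h1 t ht
    have e2 := h2 t ht
    simp only [eval_add, add_div] at *
    rw [e1, e2]; ring
  | monomial n c =>
    obtain ⟨f, g, hfg⟩ := decomp_zpow K hK ((n : ℤ) - M)
    refine ⟨C c * f, C c * g, fun t ht => ?_⟩
    have e := hfg t ht
    have : (Polynomial.monomial n c).eval t / t ^ M = c * t ^ ((n : ℤ) - M) := by
      rw [zpow_sub₀ ht]
      simp [Polynomial.eval_monomial, zpow_natCast, div_div_eq_mul_div, mul_div_assoc]
    rw [this, e]
    simp only [eval_mul, eval_C]
    ring

lemma g_zero (K : ℂ) (hK : K ≠ 0) (g : Polynomial ℂ)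
    (hg : ∀ t : ℂ, t ≠ 0 → t ^ 2 ≠ K → g.eval (t + K / t) = 0) : g = 0 := by
  have hroot : ∀ y : ℂ, y ^ 2 ≠ 4 * K → g.IsRoot y := by
    intro y hy
    obtain ⟨s, hs⟩ := IsAlgClosed.exists_pow_nat_eq (y ^ 2 - 4 * K) (n := 2) (by norm_num)
    set t : ℂ := (y + s) / 2 with htdef
    have ht0 : t ^ 2 - y * t + K = 0 := by
      rw [htdef]; linear_combination hs / 4
    have htne : t ≠ 0 := by
      intro h
      rw [h] at ht0
      apply hK
      simpa using ht0
    have ht2 : t ^ 2 ≠ K := by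
      intro h
      apply hy
      have hyt : y * t = 2 * t ^ 2 := by linear_combination -ht0 - h
      have hy2 : y = 2 * t := mul_right_cancel₀ htne (by linear_combination hyt)
      rw [hy2]; linear_combination 4 * h
    have hu : t + K / t = y := by
      field_simp
      linear_combination ht0
    have := hg t htne ht2
    rwa [hu] at this
  apply Polynomial.eq_zero_of_infinite_isRoot
  have hfin : {y : ℂ | y ^ 2 = 4 * K}.Finite := by
    obtain ⟨s, hs⟩ := IsAlgClosed.exists_pow_nat_eq (4 * K) (n := 2) (by norm_num)
    apply Set.Finite.subset ((Set.finite_singleton (-s)).insert s)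
    intro y hy
    have hy' : y ^ 2 = 4 * K := hy
    have h2 : (y - s) * (y + s) = 0 := by linear_combination hy' - hs
    rcases mul_eq_zero.mp h2 with h | h
    · exact Set.mem_insert_iff.mpr (Or.inl (by linear_combination h))
    · exact Set.mem_insert_iff.mpr (Or.inr (by
        rw [Set.mem_singleton_iff]; linear_combination h))
  have : {y : ℂ | y ^ 2 = 4 * K}ᶜ.Infinite := hfin.infinite_compl
  apply this.mono
  intro y hy
  exact hroot y hy

end Aux

theorem invariant_Laurent_polynomials_are_polynomials_in_lambda
    (q q2 : ℝ) (hq0 : 0 < q) (hq1 : q < 1) (hq2pos : 0 < q2) (hq2 : q2 ^ 2 = q)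
    (a b c d : ℂ) (ha : a ≠ 0) (hb : b ≠ 0) (hc : c ≠ 0) (hd : d ≠ 0)
    (j : ℤ)
    -- the Laurent polynomial `r(t) = p(t)/t^M`
    (p : Polynomial ℂ) (M : ℕ) :
    ((∀ t : ℂ, t ≠ 0 →
        Polynomial.eval ((q : ℂ) ^ (j + 1) / (a * b * c * d * t)) p /
            ((q : ℂ) ^ (j + 1) / (a * b * c * d * t)) ^ M =
          Polynomial.eval t p / t ^ M) ↔
      ∃ h : Polynomial ℂ, ∀ t : ℂ, t ≠ 0 →
        Polynomial.eval t p / t ^ M =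
          Polynomial.eval (lamHalf (a * b * c * d) (q2 : ℂ) j t) h) ∧
    -- in particular `λ_{n-j/2}` itself is invariant under `I^{(j)}`
    (∀ t : ℂ, t ≠ 0 →
      lamHalf (a * b * c * d) (q2 : ℂ) j ((q : ℂ) ^ (j + 1) / (a * b * c * d * t)) =
        lamHalf (a * b * c * d) (q2 : ℂ) j t) := by
  have hq2c : (q2 : ℂ) ≠ 0 := by exact_mod_cast hq2pos.ne'
  have hqc0 : (q : ℂ) ≠ 0 := by exact_mod_cast hq0.ne'
  have hqc : (q : ℂ) = (q2 : ℂ) ^ 2 := by exact_mod_cast hq2.symm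
  have habcd : a * b * c * d ≠ 0 := by
    exact mul_ne_zero (mul_ne_zero (mul_ne_zero ha hb) hc) hd
  set A : ℂ := (q2 : ℂ) ^ j with hAdef
  set B : ℂ := a * b * c * d * (q2 : ℂ) ^ (-j - 2) with hBdef
  set K : ℂ := (q : ℂ) ^ (j + 1) / (a * b * c * d) with hKdef
  have hA0 : A ≠ 0 := zpow_ne_zero _ hq2c
  have hB0 : B ≠ 0 := mul_ne_zero habcd (zpow_ne_zero _ hq2c)
  have hK0 : K ≠ 0 := div_ne_zero (zpow_ne_zero _ hqc0) habcd
  -- B * K = A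
  have hBK : B * K = A := by
    rw [hBdef, hKdef, hAdef, hqc, ← zpow_natCast ((q2 : ℂ)) 2, ← zpow_mul]
    field_simp
    rw [← zpow_add₀ hq2c]
    congr 1; push_cast; ring
  -- A * B = abcd / q
  have hq2n : (q2 : ℂ) ^ (-2 : ℤ) = ((q2 : ℂ) ^ 2)⁻¹ := by
    rw [show (-2 : ℤ) = -((2 : ℕ) : ℤ) by norm_num, zpow_neg, zpow_natCast]
  have hAB : A * B = a * b * c * d / (q : ℂ) := by
    rw [hAdef, hBdef, hqc]
    rw [show (q2 : ℂ) ^ j * (a * b * c * d * (q2 : ℂ) ^ (-j - 2))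
        = a * b * c * d * ((q2 : ℂ) ^ j * (q2 : ℂ) ^ (-j - 2)) by ring]
    rw [← zpow_add₀ hq2c, show j + (-j - 2) = -2 by ring, hq2n, div_eq_mul_inv]
  set C0 : ℂ := -(A * B + 1) with hC0def
  -- lamHalf = B * (t + K/t) + C0
  have hlam : ∀ t : ℂ, t ≠ 0 →
      lamHalf (a * b * c * d) (q2 : ℂ) j t = B * (t + K / t) + C0 := by
    intro t ht
    unfold AW.lamHalf
    rw [← hAdef]
    have hb' : a * b * c * d * (q2 : ℂ) ^ (-j - 2) = B := rfl
    rw [hb', hC0def, ← hBK]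
    field_simp
    ring
  -- the substitution point
  have hσ : ∀ t : ℂ, t ≠ 0 →
      (q : ℂ) ^ (j + 1) / (a * b * c * d * t) = K / t := by
    intro t ht
    rw [hKdef]
    field_simp
  have hKt : ∀ t : ℂ, t ≠ 0 → K / t ≠ 0 := fun t ht => div_ne_zero hK0 ht
  have huinv : ∀ t : ℂ, t ≠ 0 → K / t + K / (K / t) = t + K / t := by
    intro t ht
    have h' : K / (K / t) = t := by
      field_simp
    rw [h', add_comm]
  have hlaminv : ∀ t : ℂ, t ≠ 0 →
      lamHalf (a * b * c * d) (q2 : ℂ) j ((q : ℂ) ^ (j + 1) / (a * b * c * d * t)) =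
        lamHalf (a * b * c * d) (q2 : ℂ) j t := by
    intro t ht
    rw [hσ t ht, hlam _ (hKt t ht), hlam t ht, huinv t ht]
  refine ⟨⟨fun hinv => ?_, fun ⟨h, hh⟩ t ht => ?_⟩, hlaminv⟩
  · -- forward
    obtain ⟨f, g, hfg⟩ := decomp_laurent K hK0 p M
    have hgz : g = 0 := by
      apply g_zero K hK0
      intro t ht ht2
      have e1 := hfg t ht
      have e2 := hfg (K / t) (hKt t ht)
      rw [huinv t ht] at e2
      have einv := hinv t ht
      rw [hσ t ht] at einv
      rw [e1, e2] at einv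
      have : (K / t - t) * g.eval (t + K / t) = 0 := by linear_combination einv
      rcases mul_eq_zero.mp this with h | h
      · exfalso
        apply ht2
        have : K = t * t := by
          field_simp at h
          linear_combination h
        rw [this]; ring
      · exact h
    refine ⟨f.comp (Polynomial.C B⁻¹ * (Polynomial.X - Polynomial.C C0)), fun t ht => ?_⟩
    rw [hfg t ht, hgz, Polynomial.eval_comp]
    simp only [Polynomial.eval_mul, Polynomial.eval_sub, Polynomial.eval_C, Polynomial.eval_X,
      Polynomial.eval_zero, mul_zero, add_zero]
    congr 1
    rw [hlam t ht]
    field_simp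
    ring
  · -- backward
    have h1 := hh (K / t) (hKt t ht)
    have h2 := hh t ht
    rw [hσ t ht, h1, h2, ← hlaminv t ht, hσ t ht]
end

section
/- For all integers 1 ≤ i ≤ k and 1 ≤ j ≤ k, the involution I^{(k−1)} reverses the row index of the κ-factors: I^{(k−1)}(κ^{b;i,j}_n) = κ^{b;k−i+1,j}_n as Laurent polynomials in t = q^n; the same identity holds for κ^{c;i,j}_n and κ^{d;i,j}_n. (Equation (5.3).) -/
open scoped BigOperators

open AW


private lemma choose2 (n : ℕ) : 2 * n.choose 2 + n = n * n := by
  induction n with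
  | zero => rfl
  | succ p ih =>
    rw [Nat.choose_succ_succ, Nat.choose_one_right]
    nlinarith [ih]

private lemma qflip (q w : ℂ) (hq : q ≠ 0) (hw : w ≠ 0) (e n : ℕ) :
    qpoch q (q^e/w) n
      = (-1)^n * (q^e/w)^n * q^(n.choose 2) * qpoch q (w * q^(1-(e:ℤ)-(n:ℤ))) n := by
  induction n with
  | zero => simp [qpoch]
  | succ p ih =>
    push_cast
    rw [qpoch, Finset.prod_range_succ, ← qpoch, ih]
    have step : qpoch q (w * q^(1-(e:ℤ)-((p:ℤ)+1))) (p+1)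
        = qpoch q (w * q^(1-(e:ℤ)-(p:ℤ))) p * (1 - w * q^(1-(e:ℤ)-((p:ℤ)+1))) := by
      rw [qpoch, Finset.prod_range_succ']
      congr 1
      · apply Finset.prod_congr rfl
        intro l _
        have : w * q ^ (1-(e:ℤ)-((p:ℤ)+1)) * q ^ (l+1) = w * q ^ (1-(e:ℤ)-(p:ℤ)) * q ^ l := by
          rw [← zpow_natCast q (l+1), ← zpow_natCast q l, mul_assoc, mul_assoc,
            ← zpow_add₀ hq, ← zpow_add₀ hq]
          congr 1
          push_cast
          ring
        rw [this]
      · simp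
    rw [step]
    rw [Nat.choose_succ_succ, Nat.choose_one_right]
    have hz : (q:ℂ)^(e:ℕ) * q^(p:ℕ) * q^(1-(e:ℤ)-((p:ℤ)+1)) = 1 := by
      rw [← zpow_natCast q e, ← zpow_natCast q p, ← zpow_add₀ hq, ← zpow_add₀ hq]
      rw [show (e:ℤ) + (p:ℤ) + (1-(e:ℤ)-((p:ℤ)+1)) = 0 by ring, zpow_zero]
    set Q := qpoch q (w * q^(1-(e:ℤ)-(p:ℤ))) p
    set X := q ^ (1-(e:ℤ)-((p:ℤ)+1))
    rw [pow_add]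
    linear_combination (norm := skip) (-((-1:ℂ) ^ p * (q ^ e / w) ^ p * q ^ p.choose 2 * Q)) * hz
    field_simp
    linear_combination (Q * q ^ p * q ^ (p * e) * q ^ e * q ^ p.choose 2 * w⁻¹ ^ p * (-1:ℂ) ^ p * (1 - w * X)) * mul_inv_cancel₀ hw

private lemma qflip2 (q w1 w2 : ℂ) (hq : q ≠ 0) (hw1 : w1 ≠ 0) (hw2 : w2 ≠ 0) (f n : ℕ) :
    qpoch q (q^(f+1)/w1) n * qpoch q (q^(f+1)/w2) n
      = q^(n*(n+2*f+1)) / (w1*w2)^n *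
        (qpoch q (w1 * q^(-(f:ℤ)-(n:ℤ))) n * qpoch q (w2 * q^(-(f:ℤ)-(n:ℤ))) n) := by
  have e1 : ((-1:ℂ))^n * (-1:ℂ)^n = 1 := by
    rw [← pow_add, ← two_mul, pow_mul, neg_one_sq, one_pow]
  have e2 : ((q:ℂ)^(f+1))^n * (q^(f+1))^n * ((q:ℂ)^(n.choose 2) * q^(n.choose 2))
      = q^(n*(n+2*f+1)) := by
    rw [← pow_mul, ← pow_add, ← pow_add, ← pow_add]
    congr 1
    nlinarith [choose2 n]
  have hc : (-1:ℂ)^n * (q^(f+1)/w1)^n * q^(n.choose 2) *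
        ((-1:ℂ)^n * (q^(f+1)/w2)^n * q^(n.choose 2)) = q^(n*(n+2*f+1)) / (w1*w2)^n := by
    rw [div_pow, div_pow,
      show (-1:ℂ)^n * ((q^(f+1))^n/w1^n) * q^(n.choose 2) *
          ((-1:ℂ)^n * ((q^(f+1))^n/w2^n) * q^(n.choose 2))
        = ((-1:ℂ)^n*(-1:ℂ)^n) * (((q:ℂ)^(f+1))^n*(q^(f+1))^n*((q:ℂ)^(n.choose 2)*q^(n.choose 2)))
          / (w1^n*w2^n) from by ring]
    rw [e1, e2, one_mul, mul_pow]
  rw [qflip q w1 hq hw1 (f+1) n, qflip q w2 hq hw2 (f+1) n,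
    show 1-((f+1:ℕ):ℤ)-(n:ℤ) = -(f:ℤ)-(n:ℤ) by push_cast; ring]
  linear_combination (qpoch q (w1 * q^(-(f:ℤ)-(n:ℤ))) n * qpoch q (w2 * q^(-(f:ℤ)-(n:ℤ))) n) * hc

private lemma kapB_key (q a b c d t : ℂ) (hq : q ≠ 0) (ha : a ≠ 0) (hb : b ≠ 0) (hc : c ≠ 0)
    (hd : d ≠ 0) (ht : t ≠ 0) (k i j : ℕ) (hi1 : 1 ≤ i) (hik : i ≤ k)
    (s : ℂ) (hs : s = a * b * c * d) :
    kapB q a b c d k i j (q ^ (k:ℤ) / (s * t)) = kapB q a b c d k (k + 1 - i) j t := by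
  subst hs
  obtain ⟨m, rfl⟩ : ∃ m, i = m + 1 := ⟨i - 1, by omega⟩
  obtain ⟨n, rfl⟩ : ∃ n, k = n + m + 1 := ⟨k - (m + 1), by omega⟩
  rw [show n + m + 1 + 1 - (m + 1) = n + 1 from by omega]
  simp only [kapB]
  rw [show n + m + 1 - (m + 1) = n from by omega,
      show m + 1 - 1 = m from rfl,
      show n + m + 1 - (n + 1) = m from by omega,
      show n + 1 - 1 = n from rfl]
  have hK : (q:ℂ) ^ (((n+m+1:ℕ)):ℤ) * q ^ (1 - ((n+m+1:ℕ):ℤ)) = q ^ (0+1:ℕ) := by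
    rw [← zpow_add₀ hq, show ((n+m+1:ℕ):ℤ) + (1 - ((n+m+1:ℕ):ℤ)) = ((0+1:ℕ):ℤ) from by ring,
      zpow_natCast]
  have hI : (q:ℂ) ^ (((n+m+1:ℕ)):ℤ) * q ^ (1 - ((m+1:ℕ):ℤ)) = q ^ (n+1:ℕ) := by
    rw [← zpow_add₀ hq, show ((n+m+1:ℕ):ℤ) + (1 - ((m+1:ℕ):ℤ)) = ((n+1:ℕ):ℤ) from by
      push_cast; ring, zpow_natCast]
  have habcdt : a*b*c*d*t ≠ 0 := by simp [ha, hb, hc, hd, ht]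
  have hA1 : a * c * ((q:ℂ) ^ (((n+m+1:ℕ)):ℤ) / (a*b*c*d*t)) * q ^ (1 - ((n+m+1:ℕ):ℤ))
      = q ^ (0+1:ℕ) / (b*d*t) := by
    rw [eq_div_iff (by simp [hb, hd, ht] : b*d*t ≠ (0:ℂ)),
      show a * c * ((q:ℂ) ^ (((n+m+1:ℕ)):ℤ) / (a*b*c*d*t)) * q ^ (1 - ((n+m+1:ℕ):ℤ)) * (b*d*t)
        = ((q:ℂ) ^ (((n+m+1:ℕ)):ℤ) * q ^ (1 - ((n+m+1:ℕ):ℤ))) * ((a*b*c*d*t) * (a*b*c*d*t)⁻¹)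
        from by rw [div_eq_mul_inv]; ring,
      mul_inv_cancel₀ habcdt, mul_one, hK]
  have hA2 : a * d * ((q:ℂ) ^ (((n+m+1:ℕ)):ℤ) / (a*b*c*d*t)) * q ^ (1 - ((n+m+1:ℕ):ℤ))
      = q ^ (0+1:ℕ) / (b*c*t) := by
    rw [eq_div_iff (by simp [hb, hc, ht] : b*c*t ≠ (0:ℂ)),
      show a * d * ((q:ℂ) ^ (((n+m+1:ℕ)):ℤ) / (a*b*c*d*t)) * q ^ (1 - ((n+m+1:ℕ):ℤ)) * (b*c*t)
        = ((q:ℂ) ^ (((n+m+1:ℕ)):ℤ) * q ^ (1 - ((n+m+1:ℕ):ℤ))) * ((a*b*c*d*t) * (a*b*c*d*t)⁻¹)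
        from by rw [div_eq_mul_inv]; ring,
      mul_inv_cancel₀ habcdt, mul_one, hK]
  have hA3 : b * c * ((q:ℂ) ^ (((n+m+1:ℕ)):ℤ) / (a*b*c*d*t)) * q ^ (1 - ((m+1:ℕ):ℤ))
      = q ^ (n+1:ℕ) / (a*d*t) := by
    rw [eq_div_iff (by simp [ha, hd, ht] : a*d*t ≠ (0:ℂ)),
      show b * c * ((q:ℂ) ^ (((n+m+1:ℕ)):ℤ) / (a*b*c*d*t)) * q ^ (1 - ((m+1:ℕ):ℤ)) * (a*d*t)
        = ((q:ℂ) ^ (((n+m+1:ℕ)):ℤ) * q ^ (1 - ((m+1:ℕ):ℤ))) * ((a*b*c*d*t) * (a*b*c*d*t)⁻¹)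
        from by rw [div_eq_mul_inv]; ring,
      mul_inv_cancel₀ habcdt, mul_one, hI]
  have hA4 : b * d * ((q:ℂ) ^ (((n+m+1:ℕ)):ℤ) / (a*b*c*d*t)) * q ^ (1 - ((m+1:ℕ):ℤ))
      = q ^ (n+1:ℕ) / (a*c*t) := by
    rw [eq_div_iff (by simp [ha, hc, ht] : a*c*t ≠ (0:ℂ)),
      show b * d * ((q:ℂ) ^ (((n+m+1:ℕ)):ℤ) / (a*b*c*d*t)) * q ^ (1 - ((m+1:ℕ):ℤ)) * (a*c*t)
        = ((q:ℂ) ^ (((n+m+1:ℕ)):ℤ) * q ^ (1 - ((m+1:ℕ):ℤ))) * ((a*b*c*d*t) * (a*b*c*d*t)⁻¹)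
        from by rw [div_eq_mul_inv]; ring,
      mul_inv_cancel₀ habcdt, mul_one, hI]
  rw [hA1, hA2, hA3, hA4]
  rw [show (1:ℤ) - ((n+1:ℕ):ℤ) = -((0:ℕ):ℤ) - (n:ℤ) from by push_cast; ring,
      show (1:ℤ) - ((n+m+1:ℕ):ℤ) = -((n:ℕ):ℤ) - (m:ℤ) from by push_cast; ring]
  rw [qflip2 q (b*d*t) (b*c*t) hq (by simp [hb, hd, ht]) (by simp [hb, hc, ht]) 0 n,
      qflip2 q (a*d*t) (a*c*t) hq (by simp [ha, hd, ht]) (by simp [ha, hc, ht]) n m]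
  rw [show -((((n+m+1:ℕ)):ℤ) - 1) = -((n+m:ℕ):ℤ) from by push_cast; ring,
      zpow_neg, zpow_neg]
  simp only [zpow_natCast, zpow_sub₀ (div_ne_zero hb ha)]
  rw [div_pow, inv_div]
  field_simp
  rw [div_pow, div_pow]
  field_simp
  ring

theorem involution_reverses_kappa_row_index
    (q : ℝ) (hq0 : 0 < q) (hq1 : q < 1)
    (a b c d : ℂ) (ha : a ≠ 0) (hb : b ≠ 0) (hc : c ≠ 0) (hd : d ≠ 0)
    (k : ℕ) (hk : 1 ≤ k)
    (i j : ℕ) (hi1 : 1 ≤ i) (hik : i ≤ k) (hj1 : 1 ≤ j) (hjk : j ≤ k) :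
    ∀ t : ℂ, t ≠ 0 →
      kapB (q : ℂ) a b c d k i j ((q : ℂ) ^ (k : ℤ) / (a * b * c * d * t)) =
          kapB (q : ℂ) a b c d k (k + 1 - i) j t ∧
      kapB (q : ℂ) a c b d k i j ((q : ℂ) ^ (k : ℤ) / (a * b * c * d * t)) =
          kapB (q : ℂ) a c b d k (k + 1 - i) j t ∧
      kapB (q : ℂ) a d c b k i j ((q : ℂ) ^ (k : ℤ) / (a * b * c * d * t)) =
          kapB (q : ℂ) a d c b k (k + 1 - i) j t := by
  intro t ht
  have hq : (q:ℂ) ≠ 0 := Complex.ofReal_ne_zero.mpr hq0.ne'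
  exact ⟨kapB_key (q:ℂ) a b c d t hq ha hb hc hd ht k i j hi1 hik (a*b*c*d) rfl,
    kapB_key (q:ℂ) a c b d t hq ha hc hb hd ht k i j hi1 hik (a*b*c*d) (by ring),
    kapB_key (q:ℂ) a d c b t hq ha hd hc hb ht k i j hi1 hik (a*b*c*d) (by ring)⟩
end

section
/- The Laurent polynomial τ_n in t = q^n satisfies I^{(k−1)}(τ_n) = (−1)^{k(k−1)/2}·τ_n; that is, τ_n is invariant under the substitution q^n ↦ 1/(abcd·q^{n−k}) when k ≡ 0, 1 (mod 4) and anti-invariant when k ≡ 2, 3 (mod 4). -/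
open scoped BigOperators

open AW

section Aux

open AW

private lemma AWtri_succ (m : ℕ) : (m+2)*(m+1)/2 = (m+1)*m/2 + (m+1) := by
  obtain ⟨c, hc⟩ := Nat.even_mul_succ_self m
  have h1 : (m+2)*(m+1) = (c+c) + 2*(m+1) := by rw [← hc]; ring
  have h2 : (m+1)*m = c+c := by rw [← hc]; ring
  rw [h1, h2]; omega

private lemma AWsign_revPerm : ∀ (k : ℕ),
    Equiv.Perm.sign (Fin.revPerm : Equiv.Perm (Fin k)) = (-1)^(k*(k-1)/2) := by
  intro k
  induction k with
  | zero => simp [Subsingleton.elim (Fin.revPerm : Equiv.Perm (Fin 0)) 1]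
  | succ n ih =>
    set τ : Equiv.Perm (Fin (n+1)) :=
      (finSuccEquivLast.symm).permCongr (Fin.revPerm : Equiv.Perm (Fin n)).optionCongr with hτ
    have hdecomp : (Fin.revPerm : Equiv.Perm (Fin (n+1))) = (Fin.last n).cycleRange * τ := by
      ext x
      refine Fin.lastCases ?_ ?_ x
      · simp [τ, Equiv.permCongr_apply, Fin.cycleRange_self]
      · intro i
        simp only [τ, Equiv.Perm.mul_apply, Equiv.permCongr_apply, Equiv.symm_symm,
          finSuccEquivLast_castSucc, Equiv.optionCongr_apply, Option.map_some,
          finSuccEquivLast_symm_some, Fin.revPerm_apply]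
        have hlt : (Fin.castSucc (Fin.rev i)) < Fin.last n := Fin.castSucc_lt_last _
        rw [Fin.cycleRange_of_lt hlt, Fin.val_add_one_of_lt hlt]
        simp only [Fin.coe_castSucc, Fin.val_rev]
        omega
    rw [hdecomp, Equiv.Perm.sign_mul, Fin.sign_cycleRange, hτ,
      Equiv.Perm.sign_permCongr, Equiv.optionCongr_sign, ih, ← pow_add]
    congr 1
    simp only [Fin.val_last]
    rcases n with _|m
    · rfl
    · rw [Nat.add_sub_cancel, Nat.add_sub_cancel, show m+1+1 = m+2 from rfl, AWtri_succ]
      omega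

private lemma AWqpoch_transform (q y : ℂ) (hq : q ≠ 0) (hy : y ≠ 0) (e : ℤ) (m : ℕ) :
    qpoch q (q^e / y) m = (-1:ℂ)^m * (q^e)^m * (∏ l ∈ Finset.range m, (q:ℂ)^l) * (y^m)⁻¹ *
      qpoch q (y * q^(1 - e - (m:ℤ))) m := by
  unfold qpoch
  rw [← Finset.prod_range_reflect (fun l => 1 - (y * q^(1 - e - (m:ℤ))) * q ^ l) m]
  rw [show ((-1:ℂ)^m * (q^e)^m * (∏ l ∈ Finset.range m, (q:ℂ)^l) * (y^m)⁻¹ : ℂ) =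
    ∏ l ∈ Finset.range m, ((-1) * q^e * q^l * y⁻¹) by
      rw [Finset.prod_mul_distrib, Finset.prod_mul_distrib, Finset.prod_mul_distrib]
      simp [Finset.prod_const, inv_pow]]
  rw [← Finset.prod_mul_distrib]
  refine Finset.prod_congr rfl fun l hl => ?_
  have hlm : l < m := Finset.mem_range.mp hl
  have key : q^e * q^(l:ℕ) * (q^(1 - e - (m:ℤ)) * q^((m - 1 - l : ℕ))) = 1 := by
    rw [← zpow_natCast q l, ← zpow_natCast q (m - 1 - l), ← zpow_add₀ hq, ← zpow_add₀ hq,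
      ← zpow_add₀ hq]
    rw [show (e + (l:ℤ) + (1 - e - (m:ℤ) + ((m - 1 - l : ℕ):ℤ))) = 0 by push_cast; omega]
    exact zpow_zero q
  have h2 : (-1:ℂ) * q^e * q^l * y⁻¹ * (1 - y * q^(1-e-(m:ℤ)) * q^(m-1-l))
      = -(q^e*q^l*y⁻¹) + q^e*q^l*(q^(1-e-(m:ℤ))*q^(m-1-l)) := by
    field_simp; ring
  rw [h2, key]
  field_simp
  ring

private lemma AWprod_q_sq (q : ℂ) (hq : q ≠ 0) (m : ℕ) :
    (∏ l ∈ Finset.range m, q^l)^2 = q^(m*m) * (q^m)⁻¹ := by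
  induction m with
  | zero => simp
  | succ n ih =>
    rw [Finset.prod_range_succ, mul_pow, ih]
    rw [show (n+1)*(n+1) = n*n + (n + (n+1)) by ring, pow_add, pow_add, pow_succ]
    field_simp

private lemma AWqpoch_transform_pair (q y z : ℂ) (hq : q ≠ 0) (hy : y ≠ 0) (hz : z ≠ 0)
    (e : ℤ) (m : ℕ) :
    qpoch q (q^e/y) m * qpoch q (q^e/z) m =
      (q^e)^m * (q^e)^m * q^(m*m) * (q^m)⁻¹ * (y^m)⁻¹ * (z^m)⁻¹ *
        (qpoch q (y*q^(1-e-(m:ℤ))) m * qpoch q (z*q^(1-e-(m:ℤ))) m) := by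
  rw [AWqpoch_transform q y hq hy e m, AWqpoch_transform q z hq hz e m]
  have hsgn : (-1:ℂ)^m * (-1:ℂ)^m = 1 := by
    rw [← pow_add, show m + m = 2*m by ring, pow_mul]; norm_num
  have hG := AWprod_q_sq q hq m
  linear_combination ((q^e)^m * (q^e)^m * ((y^m)⁻¹*((z^m)⁻¹)) *
      (qpoch q (y*q^(1-e-(m:ℤ))) m * qpoch q (z*q^(1-e-(m:ℤ))) m) *
      (∏ l ∈ Finset.range m, (q:ℂ)^l)^2) * hsgn +
    ((q^e)^m * (q^e)^m * ((y^m)⁻¹*((z^m)⁻¹)) *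
      (qpoch q (y*q^(1-e-(m:ℤ))) m * qpoch q (z*q^(1-e-(m:ℤ))) m)) * hG

set_option maxHeartbeats 1600000 in
private lemma AWkapB_inv (q a b c d t : ℂ) (hq : q ≠ 0) (ha : a ≠ 0) (hb : b ≠ 0) (hc : c ≠ 0)
    (hd : d ≠ 0) (ht : t ≠ 0) (k i j : ℕ) (h1 : 1 ≤ i) (h2 : i ≤ k) :
    kapB q a b c d k i j (q^(k:ℤ)/(a*b*c*d*t)) = kapB q a b c d k (k+1-i) j t := by
  have hm1 : k - i + (i - 1) + 1 = k := by omega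
  set m1 := k - i with hm1d
  set m2 := i - 1 with hm2d
  have hk : k = m1 + m2 + 1 := by omega
  have hi : i = m2 + 1 := by omega
  have hki : k + 1 - i = m1 + 1 := by omega
  have hbdt : b*d*t ≠ 0 := by simp [hb, hd, ht]
  have hbct : b*c*t ≠ 0 := by simp [hb, hc, ht]
  have hadt : a*d*t ≠ 0 := by simp [ha, hd, ht]
  have hact : a*c*t ≠ 0 := by simp [ha, hc, ht]
  have habcdt : a*b*c*d*t ≠ 0 := by simp [ha, hb, hc, hd, ht]
  have hq1 : q^(k:ℤ) * q^(1-(k:ℤ)) = q := by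
    rw [← zpow_add₀ hq, show (k:ℤ)+(1-(k:ℤ)) = 1 by ring, zpow_one]
  have hq2 : q^(k:ℤ) * q^(1-(i:ℤ)) = q^((m1:ℤ)+1) := by
    rw [← zpow_add₀ hq]; congr 1; push_cast [hk, hi]; ring
  have A1 : a * c * (q^(k:ℤ)/(a*b*c*d*t)) * q^(1-(k:ℤ)) = q^(1:ℤ)/(b*d*t) := by
    rw [zpow_one]; field_simp; exact hq1
  have A2 : a * d * (q^(k:ℤ)/(a*b*c*d*t)) * q^(1-(k:ℤ)) = q^(1:ℤ)/(b*c*t) := by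
    rw [zpow_one]; field_simp; exact hq1
  have A3 : b * c * (q^(k:ℤ)/(a*b*c*d*t)) * q^(1-(i:ℤ)) = q^((m1:ℤ)+1)/(a*d*t) := by
    field_simp; exact hq2
  have A4 : b * d * (q^(k:ℤ)/(a*b*c*d*t)) * q^(1-(i:ℤ)) = q^((m1:ℤ)+1)/(a*c*t) := by
    field_simp; exact hq2
  unfold kapB
  rw [hki]
  rw [show k - (m1+1) = m2 by omega, show m1 + 1 - 1 = m1 from rfl]
  rw [A1, A2, A3, A4]
  rw [AWqpoch_transform_pair q (b*d*t) (b*c*t) hq hbdt hbct 1 m1,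
      AWqpoch_transform_pair q (a*d*t) (a*c*t) hq hadt hact ((m1:ℤ)+1) m2]
  rw [show (1:ℤ) - 1 - (m1:ℤ) = 1 - ((m1+1:ℕ):ℤ) by push_cast; ring]
  rw [show (1:ℤ) - ((m1:ℤ)+1) - (m2:ℤ) = 1 - (k:ℤ) by rw [hk]; push_cast; ring]
  have hba : (b:ℂ)/a ≠ 0 := div_ne_zero hb ha
  rw [show ((b:ℂ)/a)^((j:ℤ)-((m1+1:ℕ):ℤ)) =
      (b/a)^((j:ℤ)-(i:ℤ)) * ((b/a)^(m2:ℕ) * ((b/a)^(m1:ℕ))⁻¹) by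
    rw [show (j:ℤ) - ((m1+1:ℕ):ℤ) = ((j:ℤ)-(i:ℤ)) + ((m2:ℤ) - (m1:ℤ)) by
      push_cast [hi]; ring]
    rw [zpow_add₀ hba]
    congr 1
    rw [zpow_sub₀ hba, zpow_natCast, zpow_natCast, div_eq_mul_inv]]
  rw [show (-((k:ℤ)-1)) = -((m1+m2 : ℕ):ℤ) by push_cast [hk]; ring]
  rw [show (q:ℂ)^(k:ℤ) = (q:ℂ)^(((m1+m2+1:ℕ)):ℤ) by rw [hk]]
  rw [show ((q:ℂ)^((m1:ℤ)+1)) = (q:ℂ)^(((m1+1:ℕ)):ℤ) by norm_cast]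
  simp only [zpow_neg, zpow_natCast, zpow_one]
  field_simp
  simp only [div_pow]
  field_simp
  ring

private lemma AWkapD_inv (q a b c d t : ℂ) (hq : q ≠ 0) (ha : a ≠ 0) (hb : b ≠ 0) (hc : c ≠ 0)
    (hd : d ≠ 0) (ht : t ≠ 0) (δ : Fin 4) (k i j : ℕ) (h1 : 1 ≤ i) (h2 : i ≤ k) :
    kapD q a b c d δ k i j (q^(k:ℤ)/(a*b*c*d*t)) = kapD q a b c d δ k (k+1-i) j t := by
  fin_cases δ
  · rfl
  · exact AWkapB_inv q a b c d t hq ha hb hc hd ht k i j h1 h2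
  · show kapB q a c b d k i j _ = kapB q a c b d k (k+1-i) j t
    rw [show a*b*c*d*t = a*c*b*d*t by ring]
    exact AWkapB_inv q a c b d t hq ha hc hb hd ht k i j h1 h2
  · show kapB q a d c b k i j _ = kapB q a d c b k (k+1-i) j t
    rw [show a*b*c*d*t = a*d*c*b*t by ring]
    exact AWkapB_inv q a d c b t hq ha hd hc hb ht k i j h1 h2

private lemma AWlamt_inv (q a b c d t : ℂ) (hq : q ≠ 0) (ha : a ≠ 0) (hb : b ≠ 0) (hc : c ≠ 0)
    (hd : d ≠ 0) (ht : t ≠ 0) (k i : ℕ) (h : i < k) :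
    lamt q a b c d ((q^(k:ℤ)/(a*b*c*d*t)) * q^(-(i:ℤ))) =
      lamt q a b c d (t * q^(-((k-1-i:ℕ):ℤ))) := by
  unfold lamt
  have h1 : (q:ℂ)^(i:ℕ) ≠ 0 := pow_ne_zero _ hq
  have h2 : (q:ℂ)^((k-1-i:ℕ)) ≠ 0 := pow_ne_zero _ hq
  rw [show (q:ℂ)^(k:ℤ) = (q:ℂ)^(k:ℕ) from zpow_natCast q k]
  rw [show (q:ℂ)^(-(i:ℤ)) = 1/((q:ℂ)^(i:ℕ)) by rw [zpow_neg, zpow_natCast, one_div]]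
  rw [show (q:ℂ)^(-((k-1-i:ℕ):ℤ)) = 1/((q:ℂ)^((k-1-i:ℕ))) by
    rw [zpow_neg, zpow_natCast, one_div]]
  rw [show (q:ℂ)^(k:ℕ) = q^(i:ℕ) * q^((k-1-i:ℕ)) * q by
    rw [← pow_add, ← pow_succ]; congr 1; omega]
  have hX : 1/((q^(i:ℕ) * q^((k-1-i:ℕ)) * q/(a*b*c*d*t)) * (1/(q:ℂ)^(i:ℕ))) - 1 =
      -(1 - a*b*c*d*(t * (1/(q:ℂ)^((k-1-i:ℕ))))/q) := by
    field_simp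
    ring
  have hY : 1 - a*b*c*d*((q^(i:ℕ) * q^((k-1-i:ℕ)) * q/(a*b*c*d*t)) * (1/(q:ℂ)^(i:ℕ)))/q =
      -(1/(t * (1/(q:ℂ)^((k-1-i:ℕ)))) - 1) := by
    field_simp
    ring
  rw [hX, hY]
  ring

end Aux


theorem tau_is_invariant_up_to_sign
    (q : ℝ) (hq0 : 0 < q) (hq1 : q < 1)
    (a b c d : ℂ) (ha : a ≠ 0) (hb : b ≠ 0) (hc : c ≠ 0) (hd : d ≠ 0)
    (k : ℕ) (hk : 1 ≤ k)
    (φ : Fin k → Polynomial ℂ) (hφ : ∀ j, φ j ≠ 0)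
    (δ : Fin k → Fin 4)
    (hind : LinearIndependent ℂ (psiF (q : ℂ) a b c d k φ δ)) :
    ∀ t : ℂ, t ≠ 0 →
      tauF (q : ℂ) a b c d k φ δ ((q : ℂ) ^ (k : ℤ) / (a * b * c * d * t)) =
        (-1 : ℂ) ^ (k * (k - 1) / 2) * tauF (q : ℂ) a b c d k φ δ t := by
  have hq : (q:ℂ) ≠ 0 := Complex.ofReal_ne_zero.mpr (ne_of_gt hq0)
  intro t ht
  unfold tauF
  have hmat : (Matrix.of fun i j : Fin k =>
      kapD (q:ℂ) a b c d (δ j) k ((i:ℕ)+1) ((j:ℕ)+1) ((q:ℂ)^(k:ℤ)/(a*b*c*d*t)) *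
        Polynomial.eval
          (lamt (q:ℂ) a b c d (((q:ℂ)^(k:ℤ)/(a*b*c*d*t)) * (q:ℂ)^(-(i:ℤ)))) (φ j))
      = (Matrix.of fun i j : Fin k =>
      kapD (q:ℂ) a b c d (δ j) k ((i:ℕ)+1) ((j:ℕ)+1) t *
        Polynomial.eval (lamt (q:ℂ) a b c d (t * (q:ℂ)^(-(i:ℤ)))) (φ j)).submatrix
          (⇑Fin.revPerm) id := by
    ext i j
    simp only [Matrix.submatrix_apply, Matrix.of_apply, id, Fin.revPerm_apply]
    have hiv : (i:ℕ) < k := i.isLt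
    congr 1
    · rw [AWkapD_inv (q:ℂ) a b c d t hq ha hb hc hd ht (δ j) k ((i:ℕ)+1) ((j:ℕ)+1)
        (by omega) (by omega)]
      congr 2
      rw [Fin.val_rev]
      omega
    · congr 1
      rw [AWlamt_inv (q:ℂ) a b c d t hq ha hb hc hd ht k (i:ℕ) hiv]
      congr 2
      rw [Fin.val_rev]
      congr 2
      omega
  rw [hmat, Matrix.det_permute, AWsign_revPerm]
  congr 1
  simp
end
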